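/- arXiv:1801.03865 — 3 statements merged into one kernel-verified Lean document; each statement's English description precedes it below -/
import Mathlib

section
/- For every instance of the cooperative data exchange problem (every n ≥ 2, k ≥ 1, and initial packet sets X_1,…,X_n ⊆ K with ⋃_{i∈N} X_i = K), there exists an optimal rate–payment pair (r,p) with r ∈ 𝓡_N and p ∈ 𝒫_N. -/
/- Setting: `n` users, `k` packets. `X i` is the initial packet set of user `i`,
`Xbar X i` its complement. Coalitions, rate vectors in `𝓡_S`, payment matrices in `𝒫_S`,
utilities, rationality, feasibility (stability of the grand coalition) and optimality,
as in "A Monetary Mechanism for Stabilizing Cooperative Data Exchange with Selfish Users". -/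

noncomputable section

/-- `S` is a coalition: the users in `S` collectively know all packets. -/
def isCoalition {n k : ℕ} (X : Fin n → Finset (Fin k)) (S : Finset (Fin n)) : Prop :=
  ∀ x : Fin k, ∃ i ∈ S, x ∈ X i

/-- The set `X̄_i` of packets wanted by user `i`. -/
def Xbar {n k : ℕ} (X : Fin n → Finset (Fin k)) (i : Fin n) : Finset (Fin k) :=
  (X i)ᶜ

/-- `|⋂_{j ∈ T} X̄_j|`. -/
def cutCard {n k : ℕ} (X : Fin n → Finset (Fin k)) (T : Finset (Fin n)) : ℕ :=
  (Finset.univ.filter fun x : Fin k => ∀ j ∈ T, x ∈ Xbar X j).card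

/-- The sum-rate `r_S`. -/
def rSum {n : ℕ} (S : Finset (Fin n)) (r : Fin n → ℕ) : ℕ := ∑ i ∈ S, r i

/-- `r ∈ 𝓡_S`: `r i = 0` off `S`, and the cut-set conditions
`∑_{i ∈ S̃} r_i ≥ |⋂_{j ∈ S∖S̃} X̄_j|` for all nonempty `S̃ ⊊ S`. -/
def rateOK {n k : ℕ} (X : Fin n → Finset (Fin k)) (S : Finset (Fin n)) (r : Fin n → ℕ) : Prop :=
  (∀ i ∉ S, r i = 0) ∧
  ∀ T : Finset (Fin n), T.Nonempty → T ⊂ S → cutCard X (S \ T) ≤ rSum T r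

/-- `p` is a payment matrix: nonnegative entries and zero diagonal. -/
def isPayMatrix {n : ℕ} (p : Fin n → Fin n → ℝ) : Prop :=
  (∀ i j, 0 ≤ p i j) ∧ ∀ i, p i i = 0

/-- `p ∈ 𝒫_S`: no payments between `S` and its complement. -/
def payOK {n : ℕ} (S : Finset (Fin n)) (p : Fin n → Fin n → ℝ) : Prop :=
  ∀ i ∈ S, ∀ j ∉ S, p i j = 0 ∧ p j i = 0

/-- Total incoming payment `p⁺_i = ∑_{j ≠ i} p_{j,i}`. -/
def pPlus {n : ℕ} (p : Fin n → Fin n → ℝ) (i : Fin n) : ℝ := ∑ j ∈ Finset.univ.erase i, p j i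

/-- Total outgoing payment `p⁻_i = ∑_{j ≠ i} p_{i,j}`. -/
def pMinus {n : ℕ} (p : Fin n → Fin n → ℝ) (i : Fin n) : ℝ := ∑ j ∈ Finset.univ.erase i, p i j

/-- The sum-payment `p_S = ∑_{i,j ∈ S} p_{i,j}`. -/
def pSum {n : ℕ} (S : Finset (Fin n)) (p : Fin n → Fin n → ℝ) : ℝ := ∑ i ∈ S, ∑ j ∈ S, p i j

/-- Utility `u_i(r,p) = (p⁺_i − r_i) + (|X̄_i| − p⁻_i)`. -/
def util {n k : ℕ} (X : Fin n → Finset (Fin k)) (r : Fin n → ℕ) (p : Fin n → Fin n → ℝ)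
    (i : Fin n) : ℝ :=
  (pPlus p i - (r i : ℝ)) + (((Xbar X i).card : ℝ) - pMinus p i)

/-- Rationality: `p⁺_i ≥ r_i` and `p⁻_i ≤ |X̄_i|` for all `i ∈ S`. -/
def rational {n k : ℕ} (X : Fin n → Finset (Fin k)) (S : Finset (Fin n)) (r : Fin n → ℕ)
    (p : Fin n → Fin n → ℝ) : Prop :=
  ∀ i ∈ S, (r i : ℝ) ≤ pPlus p i ∧ pMinus p i ≤ ((Xbar X i).card : ℝ)

/-- Feasibility: `(r,p)` is a rational pair with `r ∈ 𝓡_N`, `p ∈ 𝒫_N`, and no minor coalition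
`S` has a rational pair `(r',p')` with `r' ∈ 𝓡_S`, `p' ∈ 𝒫_S` that Pareto-dominates
`(r,p)` for the users of `S`. -/
def feasible {n k : ℕ} (X : Fin n → Finset (Fin k)) (r : Fin n → ℕ)
    (p : Fin n → Fin n → ℝ) : Prop :=
  rateOK X Finset.univ r ∧ isPayMatrix p ∧ payOK Finset.univ p ∧
  rational X Finset.univ r p ∧
  ¬ ∃ (S : Finset (Fin n)) (r' : Fin n → ℕ) (p' : Fin n → Fin n → ℝ),
      S ⊂ Finset.univ ∧ isCoalition X S ∧ rateOK X S r' ∧ isPayMatrix p' ∧ payOK S p' ∧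
      rational X S r' p' ∧
      (∀ i ∈ S, util X r p i ≤ util X r' p' i) ∧
      ∃ i ∈ S, util X r p i < util X r' p' i

/-- Optimality: feasible, and no feasible pair has strictly smaller sum-rate or
strictly smaller sum-payment. -/
def optimal {n k : ℕ} (X : Fin n → Finset (Fin k)) (r : Fin n → ℕ)
    (p : Fin n → Fin n → ℝ) : Prop :=
  feasible X r p ∧
  ¬ ∃ (r' : Fin n → ℕ) (p' : Fin n → Fin n → ℝ),
      feasible X r' p' ∧
      (rSum Finset.univ r' < rSum Finset.univ r ∨ pSum Finset.univ p' < pSum Finset.univ p)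

end

section Helpers

open Finset

variable {n k : ℕ} (X : Fin n → Finset (Fin k))

lemma cutCard_le_of_subset {A B : Finset (Fin n)} (h : A ⊆ B) :
    cutCard X B ≤ cutCard X A := by
  apply Finset.card_le_card
  intro x hx
  simp only [cutCard, Finset.mem_filter] at hx ⊢
  exact ⟨hx.1, fun j hj => hx.2 j (h hj)⟩

lemma cutCard_singleton (j : Fin n) : cutCard X {j} = (Xbar X j).card := by
  unfold cutCard
  congr 1
  ext x
  simp

lemma cutCard_eq_zero {S A : Finset (Fin n)} (hS : isCoalition X S) (h : S ⊆ A) :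
    cutCard X A = 0 := by
  unfold cutCard
  rw [Finset.card_eq_zero]
  ext x
  simp only [Finset.mem_filter, Finset.mem_univ, true_and, Finset.notMem_empty, iff_false]
  intro hx
  obtain ⟨i, hi, hxi⟩ := hS x
  have := hx i (h hi)
  simp [Xbar] at this
  exact this hxi

lemma rSum_mono (r : Fin n → ℕ) {A B : Finset (Fin n)} (h : A ⊆ B) :
    rSum A r ≤ rSum B r :=
  Finset.sum_le_sum_of_subset h

lemma rSum_le_rSum {A : Finset (Fin n)} {r r' : Fin n → ℕ} (h : ∀ i, r i ≤ r' i) :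
    rSum A r ≤ rSum A r' :=
  Finset.sum_le_sum fun i _ => h i

lemma rSum_univ_eq {S : Finset (Fin n)} {r : Fin n → ℕ} (h0 : ∀ i ∉ S, r i = 0) :
    rSum Finset.univ r = rSum S r :=
  (Finset.sum_subset (Finset.subset_univ S) (fun x _ hx => h0 x hx)).symm

end Helpers


section CycSec
open Finset Fin.NatCast Fin.CommRing
variable {n k : ℕ} {X : Fin n → Finset (Fin k)}

lemma exists_grand_rate (hn : 2 ≤ n) (hX : isCoalition X Finset.univ) :
    ∃ r : Fin n → ℕ, rateOK X Finset.univ r ∧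
      rSum Finset.univ r = ∑ i, (Xbar X i).card := by
  haveI : NeZero n := ⟨by omega⟩
  refine ⟨fun i => (Xbar X (i + 1)).card, ⟨?_, ?_⟩, ?_⟩
  · intro i hi; exact absurd (Finset.mem_univ i) hi
  · intro T hTne hT
    by_cases hall : ∀ i ∈ T, i + 1 ∈ T
    · exfalso
      obtain ⟨i0, hi0⟩ := hTne
      have hstep : ∀ m : ℕ, i0 + (m : Fin n) ∈ T := by
        intro m
        induction m with
        | zero => simpa using hi0
        | succ l ih =>
          have h2 : i0 + ((l + 1 : ℕ) : Fin n) = (i0 + (l : Fin n)) + 1 := by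
            push_cast; ring
          rw [h2]
          exact hall _ ih
      have hTuniv : T = Finset.univ := by
        apply Finset.eq_univ_of_forall
        intro j
        have h3 := hstep ((j - i0 : Fin n)).val
        rwa [Fin.cast_val_eq_self, show i0 + (j - i0) = j by ring] at h3
      exact hT.2 (le_of_eq hTuniv.symm)
    · push_neg at hall
      obtain ⟨i, hiT, hi1⟩ := hall
      calc cutCard X (Finset.univ \ T) ≤ cutCard X {i + 1} := by
            apply cutCard_le_of_subset
            intro x hx
            simp only [Finset.mem_singleton] at hx
            subst hx
            simp only [Finset.mem_sdiff, Finset.mem_univ, true_and]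
            exact hi1
          _ = (Xbar X (i + 1)).card := cutCard_singleton X _
          _ ≤ rSum T (fun i => (Xbar X (i + 1)).card) :=
            Finset.single_le_sum (f := fun i => (Xbar X (i + 1)).card)
              (fun _ _ => Nat.zero_le _) hiT
  · unfold rSum
    exact Fintype.sum_equiv (Equiv.addRight (1 : Fin n)) _ _ (fun i => rfl)

end CycSec


section BumpSec
open Finset
variable {n k : ℕ} {X : Fin n → Finset (Fin k)}

lemma rsum_ge_demand {S : Finset (Fin n)} {w : Fin n} (hw : w ∈ S)
    (hne : (S.erase w).Nonempty) {r' : Fin n → ℕ} (hr' : rateOK X S r') :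
    (Xbar X w).card ≤ rSum Finset.univ r' := by
  have hsub : S.erase w ⊂ S := Finset.erase_ssubset hw
  have h := hr'.2 (S.erase w) hne hsub
  have hsd : S \ S.erase w = {w} := by
    ext x
    simp only [Finset.mem_sdiff, Finset.mem_erase, Finset.mem_singleton]
    constructor
    · rintro ⟨hxS, hx⟩
      by_contra hne'
      exact hx ⟨hne', hxS⟩
    · rintro rfl; exact ⟨hw, fun h' => h'.1 rfl⟩
  rw [hsd, cutCard_singleton] at h
  calc (Xbar X w).card ≤ rSum (S.erase w) r' := h
    _ ≤ rSum Finset.univ r' := rSum_mono r' (Finset.subset_univ _)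

lemma bump_lemma (hk : 1 ≤ k) {S : Finset (Fin n)} (hS : S ⊂ Finset.univ)
    (hco : isCoalition X S) {r' : Fin n → ℕ} (hr' : rateOK X S r') :
    ∃ r'' : Fin n → ℕ, rateOK X Finset.univ r'' ∧
      rSum Finset.univ r'' = max (rSum Finset.univ r') ((Finset.univ \ S).sup
        (fun j => (Xbar X j).card)) := by
  obtain ⟨i0, hi0, -⟩ := hco ⟨0, hk⟩
  set M := (Finset.univ \ S).sup (fun j => (Xbar X j).card) with hM
  set B := M - rSum Finset.univ r' with hB
  refine ⟨fun i => r' i + (if i = i0 then B else 0), ⟨?_, ?_⟩, ?_⟩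
  · intro i hi; exact absurd (Finset.mem_univ i) hi
  · intro T hTne hT
    have hle : ∀ A : Finset (Fin n),
        rSum A r' ≤ rSum A (fun i => r' i + (if i = i0 then B else 0)) :=
      fun A => rSum_le_rSum (fun i => Nat.le_add_right _ _)
    by_cases hST : S ⊆ T
    · obtain ⟨j, hj⟩ : (Finset.univ \ T).Nonempty := by
        rw [Finset.sdiff_nonempty]
        exact fun h => hT.2 h
      have hjT : j ∉ T := (Finset.mem_sdiff.1 hj).2
      have hjS : j ∈ Finset.univ \ S := by
        simp only [Finset.mem_sdiff, Finset.mem_univ, true_and]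
        exact fun hjs => hjT (hST hjs)
      have h1 : cutCard X (Finset.univ \ T) ≤ (Xbar X j).card := by
        rw [← cutCard_singleton X j]
        apply cutCard_le_of_subset
        intro x hx
        simp only [Finset.mem_singleton] at hx
        subst hx
        exact hj
      have h2 : (Xbar X j).card ≤ M :=
        Finset.le_sup (f := fun j => (Xbar X j).card) hjS
      have h3 : rSum S (fun i => r' i + (if i = i0 then B else 0))
          = rSum S r' + B := by
        unfold rSum
        rw [Finset.sum_add_distrib, Finset.sum_ite_eq' S i0 (fun _ => B), if_pos hi0]
      have h4 : rSum S r' = rSum Finset.univ r' := (rSum_univ_eq hr'.1).symm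
      calc cutCard X (Finset.univ \ T) ≤ M := h1.trans h2
        _ ≤ rSum Finset.univ r' + B := by omega
        _ = rSum S (fun i => r' i + (if i = i0 then B else 0)) := by rw [h3, h4]
        _ ≤ rSum T _ := rSum_mono _ hST
    · by_cases hTS : (T ∩ S).Nonempty
      · have hss : T ∩ S ⊂ S := by
          refine ⟨Finset.inter_subset_right, fun hsub => ?_⟩
          exact hST (fun x hx => (Finset.mem_inter.1 (hsub hx)).1)
        have h := hr'.2 (T ∩ S) hTS hss
        have hsd : S \ (T ∩ S) = S \ T := by
          ext x; simp only [Finset.mem_sdiff, Finset.mem_inter]; tauto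
        rw [hsd] at h
        calc cutCard X (Finset.univ \ T) ≤ cutCard X (S \ T) :=
              cutCard_le_of_subset X (Finset.sdiff_subset_sdiff (Finset.subset_univ S)
                (le_refl T))
          _ ≤ rSum (T ∩ S) r' := h
          _ ≤ rSum T r' := rSum_mono r' Finset.inter_subset_left
          _ ≤ rSum T _ := hle T
      · have hsub : S ⊆ Finset.univ \ T := by
          intro x hx
          simp only [Finset.mem_sdiff, Finset.mem_univ, true_and]
          intro hxT
          exact hTS ⟨x, Finset.mem_inter.2 ⟨hxT, hx⟩⟩
        rw [cutCard_eq_zero X hco hsub]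
        exact Nat.zero_le _
  · unfold rSum
    rw [Finset.sum_add_distrib, Finset.sum_ite_eq' Finset.univ i0 (fun _ => B),
      if_pos (Finset.mem_univ i0)]
    have h5 : ∑ i : Fin n, r' i = rSum Finset.univ r' := rfl
    rw [h5]
    omega

end BumpSec


section Fill
open Finset
variable {n : ℕ}

lemma box_fill (W : Fin n → ℕ) (s : Finset (Fin n)) :
    ∀ c : ℕ, c ≤ ∑ i ∈ s, W i →
    ∃ ρ : Fin n → ℕ, (∀ i, ρ i ≤ W i) ∧ (∀ i ∉ s, ρ i = 0) ∧ ∑ i ∈ s, ρ i = c := by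
  induction s using Finset.induction_on with
  | empty =>
    intro c hc
    simp only [Finset.sum_empty, Nat.le_zero] at hc
    exact ⟨fun _ => 0, fun i => Nat.zero_le _, fun i _ => rfl, by simp [hc]⟩
  | @insert a s ha ih =>
    intro c hc
    rw [Finset.sum_insert ha] at hc
    obtain ⟨ρ0, hρ0W, hρ0supp, hρ0sum⟩ := ih (c - W a) (by omega)
    refine ⟨Function.update ρ0 a (min c (W a)), ?_, ?_, ?_⟩
    · intro i
      rcases eq_or_ne i a with rfl | hne
      · simp [Function.update_self]
      · simp [Function.update_of_ne hne, hρ0W i]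
    · intro i hi
      have hia : i ≠ a := fun h => hi (h ▸ Finset.mem_insert_self a s)
      rw [Function.update_of_ne hia]
      exact hρ0supp i (fun h => hi (Finset.mem_insert_of_mem h))
    · rw [Finset.sum_insert ha, Function.update_self]
      have : ∑ i ∈ s, Function.update ρ0 a (min c (W a)) i = ∑ i ∈ s, ρ0 i := by
        apply Finset.sum_congr rfl
        intro i hi
        exact Function.update_of_ne (fun h => ha (by rwa [h] at hi)) _ _
      rw [this, hρ0sum]
      omega

lemma transport (W : ℕ) : ∀ (ρ γ : Fin n → ℕ),
    (∑ i, ρ i = W) → (∑ i, γ i = W) → (∀ l, ρ l + γ l ≤ W) →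
    ∃ P : Fin n → Fin n → ℕ, (∀ i, P i i = 0) ∧
      (∀ i, ∑ j, P i j = ρ i) ∧ (∀ j, ∑ i, P i j = γ j) := by
  induction W with
  | zero =>
    intro ρ γ hρ hγ _
    have hρ0 : ∀ i, ρ i = 0 := by
      intro i
      have := Finset.single_le_sum (f := ρ) (fun i _ => Nat.zero_le _) (Finset.mem_univ i)
      omega
    have hγ0 : ∀ i, γ i = 0 := by
      intro i
      have := Finset.single_le_sum (f := γ) (fun i _ => Nat.zero_le _) (Finset.mem_univ i)
      omega
    exact ⟨fun _ _ => 0, fun _ => rfl, fun i => by simp [hρ0 i], fun j => by simp [hγ0 j]⟩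
  | succ M ih =>
    intro ρ γ hρ hγ hcap
    have hρpos : (Finset.univ.filter fun l => 1 ≤ ρ l).Nonempty := by
      by_contra h
      rw [Finset.not_nonempty_iff_eq_empty, Finset.filter_eq_empty_iff] at h
      have : ∑ i, ρ i = 0 :=
        Finset.sum_eq_zero (fun i _ => by have := h (Finset.mem_univ i); omega)
      omega
    obtain ⟨i, hi_mem, hi_max⟩ := Finset.exists_max_image _ (fun l => ρ l + γ l) hρpos
    rw [Finset.mem_filter] at hi_mem
    have hρi : 1 ≤ ρ i := hi_mem.2
    have hjex : (Finset.univ.filter fun l => l ≠ i ∧ 1 ≤ γ l).Nonempty := by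
      by_contra h
      rw [Finset.not_nonempty_iff_eq_empty, Finset.filter_eq_empty_iff] at h
      have hγl : ∀ l, l ≠ i → γ l = 0 := by
        intro l hl
        have := h (Finset.mem_univ l)
        omega
      have hsum : ∑ l, γ l = γ i := by
        rw [Finset.sum_eq_single i (fun b _ hb => hγl b hb)
          (fun h' => absurd (Finset.mem_univ i) h')]
      have hcapi := hcap i
      omega
    obtain ⟨j, hj_mem, hj_max⟩ := Finset.exists_max_image _ (fun l => ρ l + γ l) hjex
    rw [Finset.mem_filter] at hj_mem
    have hji : j ≠ i := hj_mem.2.1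
    have hγj : 1 ≤ γ j := hj_mem.2.2
    set ρ' := fun l => if l = i then ρ l - 1 else ρ l with hρ'
    set γ' := fun l => if l = j then γ l - 1 else γ l with hγ'
    have hsumρ' : ∑ l, ρ' l = M := by
      have h1 : ∑ l, ρ' l + 1 = ∑ l, ρ l := by
        rw [← Finset.add_sum_erase _ ρ' (Finset.mem_univ i),
            ← Finset.add_sum_erase _ ρ (Finset.mem_univ i)]
        have h3 : ∑ l ∈ Finset.univ.erase i, ρ' l = ∑ l ∈ Finset.univ.erase i, ρ l := by
          apply Finset.sum_congr rfl
          intro l hl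
          simp only [Finset.mem_erase] at hl
          simp [hρ', hl.1]
        have h4 : ρ' i = ρ i - 1 := by simp [hρ']
        omega
      omega
    have hsumγ' : ∑ l, γ' l = M := by
      have h1 : ∑ l, γ' l + 1 = ∑ l, γ l := by
        rw [← Finset.add_sum_erase _ γ' (Finset.mem_univ j),
            ← Finset.add_sum_erase _ γ (Finset.mem_univ j)]
        have h3 : ∑ l ∈ Finset.univ.erase j, γ' l = ∑ l ∈ Finset.univ.erase j, γ l := by
          apply Finset.sum_congr rfl
          intro l hl
          simp only [Finset.mem_erase] at hl
          simp [hγ', hl.1]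
        have h4 : γ' j = γ j - 1 := by simp [hγ']
        omega
      omega
    have hcap' : ∀ l, ρ' l + γ' l ≤ M := by
      intro l
      rcases eq_or_ne l i with rfl | hli
      · have := hcap l
        simp only [hρ', hγ', if_pos rfl]
        rw [if_neg (fun h : l = j => hji (h ▸ rfl))]
        omega
      · rcases eq_or_ne l j with rfl | hlj
        · have := hcap l
          simp only [hρ', hγ', if_neg hli, if_pos rfl]
          omega
        · simp only [hρ', hγ', if_neg hli, if_neg hlj]
          by_contra hcon
          push_neg at hcon
          have htight : ρ l + γ l = M + 1 := by have := hcap l; omega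
          rcases Nat.eq_zero_or_pos (ρ l) with hρl | hρl
          · have hγl : γ l = M + 1 := by omega
            have hpair : γ j + γ l ≤ ∑ m, γ m := by
              have h5 : ∑ m ∈ ({j, l} : Finset (Fin n)), γ m = γ j + γ l :=
                Finset.sum_pair hlj.symm
              calc γ j + γ l = ∑ m ∈ ({j, l} : Finset (Fin n)), γ m := h5.symm
                _ ≤ ∑ m, γ m := Finset.sum_le_sum_of_subset (Finset.subset_univ _)
            omega
          · have hil : M + 1 ≤ ρ i + γ i := by
              have := hi_max l (Finset.mem_filter.2 ⟨Finset.mem_univ l, hρl⟩)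
              omega
            have h1 : ρ i + ρ l ≤ ∑ m, ρ m := by
              have h5 : ∑ m ∈ ({i, l} : Finset (Fin n)), ρ m = ρ i + ρ l :=
                Finset.sum_pair hli.symm
              calc ρ i + ρ l = _ := h5.symm
                _ ≤ ∑ m, ρ m := Finset.sum_le_sum_of_subset (Finset.subset_univ _)
            have h2 : γ i + (γ l + γ j) ≤ ∑ m, γ m := by
              have h6 : ∑ m ∈ ({i, l, j} : Finset (Fin n)), γ m = γ i + (γ l + γ j) := by
                rw [Finset.sum_insert (by simp [hli.symm, hji.symm]), Finset.sum_pair hlj]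
              calc γ i + (γ l + γ j) = _ := h6.symm
                _ ≤ ∑ m, γ m := Finset.sum_le_sum_of_subset (Finset.subset_univ _)
            omega
    obtain ⟨P, hPd, hPr, hPc⟩ := ih ρ' γ' hsumρ' hsumγ' hcap'
    refine ⟨fun a b => P a b + (if a = i then (if b = j then 1 else 0) else 0), ?_, ?_, ?_⟩
    · intro a
      dsimp only
      by_cases hai : a = i
      · subst hai
        rw [hPd a, if_pos rfl, if_neg (fun h : a = j => hji (h ▸ rfl))]
      · rw [hPd a, if_neg hai]
    · intro a
      dsimp only
      rw [Finset.sum_add_distrib, hPr a]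
      by_cases hai : a = i
      · subst hai
        have h7 : ∑ b, (if a = a then (if b = j then 1 else 0) else 0) = 1 := by
          simp only [if_pos rfl]
          simp [Finset.sum_ite_eq]
        rw [h7]
        simp only [hρ', if_pos rfl]
        omega
      · have h7 : ∑ b : Fin n, (if a = i then (if b = j then 1 else 0) else 0) = 0 := by
          simp [hai]
        rw [h7]
        simp [hρ', hai]
    · intro b
      dsimp only
      rw [Finset.sum_add_distrib, hPc b]
      by_cases hbj : b = j
      · subst hbj
        have h7 : ∑ a, (if a = i then (if b = b then 1 else 0) else 0) = 1 := by
          simp [Finset.sum_ite_eq]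
        rw [h7]
        simp only [hγ', if_pos rfl]
        omega
      · have h7 : ∑ a : Fin n, (if a = i then (if b = j then 1 else 0) else 0) = 0 := by
          apply Finset.sum_eq_zero
          intro a _
          by_cases hai : a = i
          · rw [if_pos hai, if_neg hbj]
          · rw [if_neg hai]
        rw [h7]
        simp [hγ', hbj]

end Fill


section Core
open Finset
variable {n k : ℕ} {X : Fin n → Finset (Fin k)}

/-- core existence -/
lemma core_exists (hn : 2 ≤ n) (hk : 1 ≤ k) (hX : isCoalition X Finset.univ)
    {Rn : ℕ} (hRnW : Rn ≤ ∑ i, (Xbar X i).card)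
    (hmin : ∀ r, rateOK X Finset.univ r → Rn ≤ rSum Finset.univ r) :
    ∃ ρ : Fin n → ℕ, (∀ i, ρ i ≤ (Xbar X i).card) ∧ (∑ i, ρ i = Rn) ∧
      ∀ S : Finset (Fin n), S ⊂ Finset.univ → isCoalition X S →
        ∀ r', rateOK X S r' → ∑ i ∈ S, ρ i ≤ rSum Finset.univ r' := by
  classical
  set W : Fin n → ℕ := fun i => (Xbar X i).card with hWdef
  set Z : Finset (Fin n) := Finset.univ.filter (fun j => Rn ≤ W j) with hZdef
  by_cases hZ : Z.Nonempty
  · -- whales absorb everything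
    obtain ⟨w0, hw0⟩ := hZ
    have hw0W : Rn ≤ W w0 := (Finset.mem_filter.1 hw0).2
    obtain ⟨ρ, hρW, hρsupp, hρsum⟩ := box_fill W Z Rn
      (le_trans hw0W (Finset.single_le_sum (f := W) (fun _ _ => Nat.zero_le _) hw0))
    have hρuniv : ∑ i, ρ i = Rn := by
      rw [← hρsum]
      exact (Finset.sum_subset (Finset.subset_univ Z) (fun x _ hx => hρsupp x hx)).symm
    refine ⟨ρ, hρW, hρuniv, ?_⟩
    intro S hS hco r' hr'
    have hρS_le : ∑ i ∈ S, ρ i ≤ Rn := by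
      rw [← hρuniv]
      exact Finset.sum_le_sum_of_subset (Finset.subset_univ S)
    rcases Nat.eq_zero_or_pos Rn with hRn0 | hRnpos
    · omega
    by_cases hSZ : (S ∩ Z).Nonempty
    · obtain ⟨w, hw⟩ := hSZ
      rw [Finset.mem_inter] at hw
      have hwW : Rn ≤ W w := (Finset.mem_filter.1 hw.2).2
      by_cases hE : (S.erase w).Nonempty
      · have h9 := rsum_ge_demand hw.1 hE hr'
        have h10 : W w = (Xbar X w).card := rfl
        omega
      · exfalso
        rw [Finset.not_nonempty_iff_eq_empty, Finset.erase_eq_empty_iff] at hE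
        rcases hE with rfl | hSw
        · exact absurd hw.1 (Finset.notMem_empty w)
        · -- S = {w} is a coalition, so w knows everything: W w = 0
          have hall : ∀ x : Fin k, x ∈ X w := by
            intro x
            obtain ⟨i, hi, hxi⟩ := hco x
            rw [hSw, Finset.mem_singleton] at hi
            exact hi ▸ hxi
          have : W w = 0 := by
            simp only [hWdef, Xbar, Finset.card_eq_zero]
            ext x
            simp [hall x]
          omega
    · -- no whale in S : ρ vanishes on S
      have : ∑ i ∈ S, ρ i = 0 := by
        apply Finset.sum_eq_zero
        intro i hi
        apply hρsupp
        intro hiZ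
        exact hSZ ⟨i, Finset.mem_inter.2 ⟨hi, hiZ⟩⟩
      omega
  · -- no whales at all
    have hnowhale : ∀ j, W j < Rn := by
      intro j
      rw [Finset.not_nonempty_iff_eq_empty, Finset.filter_eq_empty_iff] at hZ
      have := hZ (Finset.mem_univ j)
      omega
    obtain ⟨ρ, hρW, hρsupp, hρsum⟩ := box_fill W Finset.univ Rn hRnW
    refine ⟨ρ, hρW, hρsum, ?_⟩
    intro S hS hco r' hr'
    have hρS_le : ∑ i ∈ S, ρ i ≤ Rn := by
      rw [← hρsum]
      exact Finset.sum_le_sum_of_subset (Finset.subset_univ S)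
    obtain ⟨r'', hr''OK, hr''sum⟩ := bump_lemma hk hS hco hr'
    have h1 := hmin r'' hr''OK
    rw [hr''sum] at h1
    have hM : (Finset.univ \ S).sup (fun j => (Xbar X j).card) < Rn := by
      rcases Nat.eq_zero_or_pos Rn with hRn0 | hRnpos
      · exact absurd (hnowhale ⟨0, by omega⟩) (by omega)
      rw [Finset.sup_lt_iff (by simpa using hRnpos : (⊥ : ℕ) < Rn)]
      intro b _
      exact hnowhale b
    rcases max_cases (rSum Finset.univ r') ((Finset.univ \ S).sup (fun j => (Xbar X j).card))
      with ⟨hmx, _⟩ | ⟨hmx, _⟩ <;> omega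

end Core


section MainProof
open Finset
variable {n k : ℕ} {X : Fin n → Finset (Fin k)}

/-- internal payments cancel in total utility of a coalition -/
lemma pay_cancel {S : Finset (Fin n)} {p' : Fin n → Fin n → ℝ}
    (hpm : isPayMatrix p') (hok : payOK S p') :
    ∑ i ∈ S, (pPlus p' i - pMinus p' i) = 0 := by
  have h1 : ∀ i ∈ S, pPlus p' i = ∑ j ∈ S, p' j i := by
    intro i hi
    unfold pPlus
    rw [Finset.sum_erase (f := fun j => p' j i) _ (hpm.2 i)]
    exact (Finset.sum_subset (Finset.subset_univ S)
      (fun j _ hjS => (hok i hi j hjS).2)).symm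
  have h2 : ∀ i ∈ S, pMinus p' i = ∑ j ∈ S, p' i j := by
    intro i hi
    unfold pMinus
    rw [Finset.sum_erase _ (hpm.2 i)]
    exact (Finset.sum_subset (Finset.subset_univ S)
      (fun j _ hjS => (hok i hi j hjS).1)).symm
  rw [Finset.sum_sub_distrib]
  rw [Finset.sum_congr rfl h1, Finset.sum_congr rfl h2, Finset.sum_comm]
  ring

private theorem exists_optimal_pair_aux (n k : ℕ) (hn : 2 ≤ n) (hk : 1 ≤ k)
    (X : Fin n → Finset (Fin k)) (hX : isCoalition X Finset.univ) :
    ∃ (r : Fin n → ℕ) (p : Fin n → Fin n → ℝ), optimal X r p := by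
  classical
  -- 1. the minimum achievable grand sum rate
  have hex : ∃ m : ℕ, ∃ r, rateOK X Finset.univ r ∧ rSum Finset.univ r = m := by
    obtain ⟨r, hr, hs⟩ := exists_grand_rate hn hX
    exact ⟨_, r, hr, rfl⟩
  set Rn := Nat.find hex with hRndef
  obtain ⟨rstar, hrstar, hrstarsum⟩ := Nat.find_spec hex
  have hmin : ∀ r, rateOK X Finset.univ r → Rn ≤ rSum Finset.univ r :=
    fun r hr => Nat.find_le ⟨r, hr, rfl⟩
  have hRnW : Rn ≤ ∑ i, (Xbar X i).card := by
    obtain ⟨rc, hrc, hrcsum⟩ := exists_grand_rate hn hX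
    have := hmin rc hrc
    omega
  -- 2. demand of each user is at most what the others send
  have hWr : ∀ i, (Xbar X i).card + rstar i ≤ Rn := by
    intro i
    have hne : (Finset.univ.erase i).Nonempty := by
      rw [← Finset.card_pos, Finset.card_erase_of_mem (Finset.mem_univ i),
        Finset.card_univ, Fintype.card_fin]
      omega
    have hss : Finset.univ.erase i ⊂ Finset.univ := Finset.erase_ssubset (Finset.mem_univ i)
    have h := hrstar.2 _ hne hss
    have hsd : Finset.univ \ Finset.univ.erase i = {i} := by
      ext x
      by_cases hxi : x = i <;> simp [hxi]
    rw [hsd] at h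
    have hcc : cutCard X {i} = (Xbar X i).card := by
      unfold cutCard
      congr 1
      ext x
      simp
    rw [hcc] at h
    have hsum : rstar i + rSum (Finset.univ.erase i) rstar = rSum Finset.univ rstar :=
      Finset.add_sum_erase _ rstar (Finset.mem_univ i)
    have hRs : rSum Finset.univ rstar = Rn := hrstarsum
    omega
  -- 3. core payment vector
  obtain ⟨ρ, hρW, hρsum, hρcap⟩ := core_exists hn hk hX hRnW hmin
  -- 4. payment matrix
  have hγsum : ∑ i, rstar i = Rn := hrstarsum
  obtain ⟨P, hPd, hPr, hPc⟩ := transport Rn ρ rstar hρsum hγsum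
    (fun l => le_trans (Nat.add_le_add_right (hρW l) _) (hWr l))
  set p : Fin n → Fin n → ℝ := fun i j => ((P i j : ℕ) : ℝ) with hpdef
  have hplus : ∀ i, pPlus p i = (rstar i : ℝ) := by
    intro i
    unfold pPlus
    have : ∑ j ∈ Finset.univ.erase i, p j i = ∑ j : Fin n, p j i := by
      apply Finset.sum_erase
      simp [hpdef, hPd i]
    rw [this, hpdef]
    push_cast [← hPc i]
    rfl
  have hminus : ∀ i, pMinus p i = (ρ i : ℝ) := by
    intro i
    unfold pMinus
    have : ∑ j ∈ Finset.univ.erase i, p i j = ∑ j : Fin n, p i j := by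
      apply Finset.sum_erase
      simp [hpdef, hPd i]
    rw [this, hpdef]
    push_cast [← hPr i]
    rfl
  have hpmat : isPayMatrix p := by
    constructor
    · intro i j; simp [hpdef]
    · intro i; simp [hpdef, hPd i]
  have hpok : payOK Finset.univ p := by
    intro i _ j hj
    exact absurd (Finset.mem_univ j) hj
  have hrat : rational X Finset.univ rstar p := by
    intro i _
    constructor
    · rw [hplus i]
    · rw [hminus i]
      exact_mod_cast hρW i
  -- 5. stability
  have hstab : ¬ ∃ (S : Finset (Fin n)) (r' : Fin n → ℕ) (p' : Fin n → Fin n → ℝ),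
      S ⊂ Finset.univ ∧ isCoalition X S ∧ rateOK X S r' ∧ isPayMatrix p' ∧ payOK S p' ∧
      rational X S r' p' ∧
      (∀ i ∈ S, util X rstar p i ≤ util X r' p' i) ∧
      ∃ i ∈ S, util X rstar p i < util X r' p' i := by
    rintro ⟨S, r', p', hS, hco, hr', hpm', hok', hrat', hall, i0, hi0, hlt⟩
    have hsum_lt : ∑ i ∈ S, util X rstar p i < ∑ i ∈ S, util X r' p' i :=
      Finset.sum_lt_sum hall ⟨i0, hi0, hlt⟩
    have hA : ∑ i ∈ S, util X rstar p i
        = ∑ i ∈ S, (((Xbar X i).card : ℝ) - (ρ i : ℝ)) := by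
      apply Finset.sum_congr rfl
      intro i _
      unfold util
      rw [hplus i, hminus i]
      ring
    have hB : ∑ i ∈ S, util X r' p' i
        = ∑ i ∈ S, (((Xbar X i).card : ℝ) - (r' i : ℝ)) := by
      have : ∑ i ∈ S, util X r' p' i
          = ∑ i ∈ S, (pPlus p' i - pMinus p' i)
            + ∑ i ∈ S, (((Xbar X i).card : ℝ) - (r' i : ℝ)) := by
        rw [← Finset.sum_add_distrib]
        apply Finset.sum_congr rfl
        intro i _
        unfold util
        ring
      rw [this, pay_cancel hpm' hok', zero_add]
    rw [hA, hB, Finset.sum_sub_distrib, Finset.sum_sub_distrib] at hsum_lt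
    have hr'cast : ∑ i ∈ S, ((r' i : ℕ) : ℝ) < ∑ i ∈ S, ((ρ i : ℕ) : ℝ) := by
      linarith
    have hr'nat : ∑ i ∈ S, r' i < ∑ i ∈ S, ρ i := by exact_mod_cast hr'cast
    have hcap := hρcap S hS hco r' hr'
    have : rSum Finset.univ r' = ∑ i ∈ S, r' i := by
      unfold rSum
      exact (Finset.sum_subset (Finset.subset_univ S) (fun x _ hx => hr'.1 x hx)).symm
    omega
  -- 6. our pair's pSum equals Rn
  have hpsum : pSum Finset.univ p = (Rn : ℝ) := by
    unfold pSum
    have : ∀ i, ∑ j ∈ (Finset.univ : Finset (Fin n)), p i j = (ρ i : ℝ) := by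
      intro i
      rw [hpdef]
      push_cast [← hPr i]
      rfl
    rw [Finset.sum_congr rfl (fun i _ => this i)]
    exact_mod_cast congrArg (Nat.cast : ℕ → ℝ) hρsum
  -- 7. assemble
  refine ⟨rstar, p, ⟨⟨hrstar, hpmat, hpok, hrat, hstab⟩, ?_⟩⟩
  rintro ⟨r2, p2, hfeas2, hlt2⟩
  have hr2 : Rn ≤ rSum Finset.univ r2 := hmin r2 hfeas2.1
  have hpsum2 : (rSum Finset.univ r2 : ℝ) ≤ pSum Finset.univ p2 := by
    have hcol : pSum Finset.univ p2 = ∑ j, pPlus p2 j := by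
      unfold pSum pPlus
      rw [Finset.sum_comm]
      apply Finset.sum_congr rfl
      intro j _
      exact (Finset.sum_erase (f := fun x => p2 x j) _ (hfeas2.2.1.2 j)).symm
    rw [hcol]
    unfold rSum
    push_cast
    apply Finset.sum_le_sum
    intro i _
    exact (hfeas2.2.2.2.1 i (Finset.mem_univ i)).1
  rcases hlt2 with h | h
  · rw [hrstarsum] at h; omega
  · rw [hpsum] at h
    have : (Rn : ℝ) ≤ pSum Finset.univ p2 := by
      calc (Rn : ℝ) ≤ (rSum Finset.univ r2 : ℝ) := by exact_mod_cast hr2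
        _ ≤ _ := hpsum2
    linarith

end MainProof


/-- For every instance of the cooperative data exchange problem
(every `n ≥ 2`, `k ≥ 1`, and initial packet sets with `⋃_{i∈N} X_i = K`), there exists
an optimal rate–payment pair `(r,p)` with `r ∈ 𝓡_N` and `p ∈ 𝒫_N`. -/
theorem exists_optimal_pair (n k : ℕ) (hn : 2 ≤ n) (hk : 1 ≤ k)
    (X : Fin n → Finset (Fin k)) (hX : isCoalition X Finset.univ) :
    ∃ (r : Fin n → ℕ) (p : Fin n → Fin n → ℝ), optimal X r p := by
  exact exists_optimal_pair_aux n k hn hk X hX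
end

section
/- There exists an optimal rate–payment pair (r,p) such that for every optimal pair (r̃,p̃): ∑_{i∈N} u_i(r̃,p̃) ≤ ∑_{i∈N} u_i(r,p) and min_{i∈N} u_i(r̃,p̃) ≤ min_{i∈N} u_i(r,p); i.e., there is an optimal solution simultaneously maximizing the sum-utility and the minimum utility among all optimal solutions. -/
noncomputable section CDEaux

open Finset

variable {n k : ℕ}

/-- demand of user `i` -/
def bb (X : Fin n → Finset (Fin k)) (i : Fin n) : ℕ := (Xbar X i).card

def RhoSet (X : Fin n → Finset (Fin k)) (S : Finset (Fin n)) : Set ℕ :=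
  {m | ∃ r, rateOK X S r ∧ rSum S r = m}

lemma cutCard_le (X : Fin n → Finset (Fin k)) (U : Finset (Fin n)) : cutCard X U ≤ k := by
  classical
  calc (Finset.univ.filter fun x : Fin k => ∀ j ∈ U, x ∈ Xbar X j).card
      ≤ (Finset.univ : Finset (Fin k)).card := card_le_card (filter_subset _ _)
    _ = k := by simp

lemma RhoSet_nonempty (X : Fin n → Finset (Fin k)) (S : Finset (Fin n)) :
    (RhoSet X S).Nonempty := by
  classical
  refine ⟨rSum S (fun i => if i ∈ S then k else 0), fun i => if i ∈ S then k else 0, ⟨?_, ?_⟩, rfl⟩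
  · intro i hi; simp [hi]
  · intro T hT hTS
    obtain ⟨i0, hi0⟩ := hT
    have hi0S : i0 ∈ S := hTS.1 hi0
    calc cutCard X (S \ T) ≤ k := cutCard_le X _
      _ = (fun i => if i ∈ S then k else 0) i0 := by simp [hi0S]
      _ ≤ rSum T (fun i => if i ∈ S then k else 0) := by
          unfold rSum
          exact Finset.single_le_sum (f := fun i => if i ∈ S then k else 0) (fun i _ => Nat.zero_le _) hi0

def rho (X : Fin n → Finset (Fin k)) (S : Finset (Fin n)) : ℕ := sInf (RhoSet X S)

lemma rho_le (X : Fin n → Finset (Fin k)) {S : Finset (Fin n)} {r : Fin n → ℕ}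
    (h : rateOK X S r) : rho X S ≤ rSum S r := Nat.sInf_le ⟨r, h, rfl⟩

lemma rho_spec (X : Fin n → Finset (Fin k)) (S : Finset (Fin n)) :
    ∃ r, rateOK X S r ∧ rSum S r = rho X S := Nat.sInf_mem (RhoSet_nonempty X S)

lemma cutCard_singleton_s1 (X : Fin n → Finset (Fin k)) (i : Fin n) :
    cutCard X {i} = bb X i := by
  classical
  unfold cutCard bb
  congr 1
  ext x
  simp [Finset.mem_filter]

lemma cutCard_anti (X : Fin n → Finset (Fin k)) {U V : Finset (Fin n)} (h : U ⊆ V) :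
    cutCard X V ≤ cutCard X U := by
  classical
  apply card_le_card
  intro x hx
  rw [Finset.mem_filter] at hx ⊢
  exact ⟨hx.1, fun j hj => hx.2 j (h hj)⟩

lemma cutCard_coalition (X : Fin n → Finset (Fin k)) {S : Finset (Fin n)}
    (hS : isCoalition X S) : cutCard X S = 0 := by
  classical
  unfold cutCard
  rw [Finset.card_eq_zero]
  rw [Finset.filter_eq_empty_iff]
  intro x _
  obtain ⟨i, hiS, hix⟩ := hS x
  intro hbad
  have := hbad i hiS
  rw [Xbar, Finset.mem_compl] at this
  exact this hix

lemma bb_le_rSum {X : Fin n → Finset (Fin k)} {S : Finset (Fin n)} {r : Fin n → ℕ} {i : Fin n}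
    (hi : i ∈ S) (hcard : 2 ≤ S.card) (h : rateOK X S r) : bb X i ≤ rSum S r := by
  classical
  have hT : (S.erase i).Nonempty := by
    rw [← Finset.card_pos, Finset.card_erase_of_mem hi]; omega
  have hTsub : S.erase i ⊂ S := Finset.erase_ssubset hi
  have := h.2 (S.erase i) hT hTsub
  rw [Finset.sdiff_erase_self hi, cutCard_singleton_s1] at this
  calc bb X i ≤ rSum (S.erase i) r := this
    _ ≤ rSum S r := Finset.sum_le_sum_of_subset (Finset.erase_subset _ _)

lemma bb_le_rho {X : Fin n → Finset (Fin k)} {S : Finset (Fin n)} {i : Fin n}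
    (hi : i ∈ S) (hcard : 2 ≤ S.card) : bb X i ≤ rho X S := by
  obtain ⟨r, hr, hsum⟩ := rho_spec X S
  rw [← hsum]
  exact bb_le_rSum hi hcard hr

end CDEaux
section P2
open Finset
variable {n k : ℕ}

/-- Insertion lemma: adding one user to a coalition costs at most `max ρ(A) b_j`. -/
lemma rho_insert_le {X : Fin n → Finset (Fin k)} {A : Finset (Fin n)} {j : Fin n}
    (hA : isCoalition X A) (hj : j ∉ A) (hAne : A.Nonempty) :
    rho X (insert j A) ≤ max (rho X A) (bb X j) := by
  classical
  obtain ⟨r, hr, hsum⟩ := rho_spec X A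
  obtain ⟨i0, hi0⟩ := hAne
  have hji0 : j ≠ i0 := fun h => hj (h ▸ hi0)
  set M := max (rho X A) (bb X j) with hM
  set δ := M - rho X A with hδ
  set r' := Function.update r i0 (r i0 + δ) with hr'
  have hr'_ge : ∀ i, r i ≤ r' i := by
    intro i
    by_cases h : i = i0
    · subst h; simp [hr']
    · simp [hr', Function.update_of_ne h]
  have hrsumT : ∀ T : Finset (Fin n), rSum T r ≤ rSum T r' :=
    fun T => Finset.sum_le_sum (fun i _ => hr'_ge i)
  have hsumA : rSum A r' = M := by
    unfold rSum
    rw [hr', Finset.sum_update_of_mem hi0]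
    have hle : rho X A ≤ M := le_max_left _ _
    have h2 : ∑ x ∈ A, r x = ∑ x ∈ A \ {i0}, r x + r i0 :=
      Finset.sum_eq_sum_sdiff_singleton_add hi0 r
    have hs : ∑ i ∈ A, r i = rho X A := hsum
    omega
  have hsum' : rSum (insert j A) r' = M := by
    unfold rSum
    rw [Finset.sum_insert hj]
    have h2 : r' j = 0 := by
      rw [hr', Function.update_of_ne hji0]
      exact hr.1 j hj
    have h3 : ∑ i ∈ A, r' i = M := hsumA
    omega
  have hrOK : rateOK X (insert j A) r' := by
    constructor
    · intro i hi
      have hiA : i ∉ A := fun h => hi (Finset.mem_insert_of_mem h)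
      have hii0 : i ≠ i0 := fun h => hiA (h ▸ hi0)
      rw [hr', Function.update_of_ne hii0]
      exact hr.1 i hiA
    · intro T hT hTsub
      by_cases hjT : j ∈ T
      · -- T contains j
        set T' := T.erase j with hT'
        have hT'A : T' ⊆ A := by
          intro x hx
          rw [hT', Finset.mem_erase] at hx
          rcases Finset.mem_insert.mp (hTsub.1 hx.2) with h | h
          · exact absurd h hx.1
          · exact h
        have hU : insert j A \ T = A \ T' := by
          ext x
          simp only [Finset.mem_sdiff, Finset.mem_insert, hT', Finset.mem_erase]
          constructor
          · rintro ⟨h1 | h1, h2⟩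
            · exact absurd (h1 ▸ hjT) h2
            · exact ⟨h1, fun hc => h2 hc.2⟩
          · rintro ⟨h1, h2⟩
            refine ⟨Or.inr h1, fun hc => ?_⟩
            have hxj : x ≠ j := fun h => hj (h ▸ h1)
            exact h2 ⟨hxj, hc⟩
        rcases Finset.eq_empty_or_nonempty T' with hT'e | hT'ne
        · -- T = {j}, cut is A, which has cutCard 0
          have hTA : A \ T' = A := by rw [hT'e, Finset.sdiff_empty]
          rw [hU, hTA, cutCard_coalition X hA]
          exact Nat.zero_le _
        · have hT'sub : T' ⊂ A := by
            rw [Finset.ssubset_iff_subset_ne]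
            refine ⟨hT'A, fun hEq => ?_⟩
            have : insert j A ⊆ T := by
              intro x hx
              rcases Finset.mem_insert.mp hx with h | h
              · exact h ▸ hjT
              · rw [← hEq, hT', Finset.mem_erase] at h
                exact h.2
            exact (Finset.ssubset_iff_subset_ne.mp hTsub).2
              (Finset.Subset.antisymm hTsub.1 this)
          have hcut := hr.2 T' hT'ne hT'sub
          rw [hU]
          calc cutCard X (A \ T') ≤ rSum T' r := hcut
            _ ≤ rSum T' r' := hrsumT T'
            _ ≤ rSum T r' := Finset.sum_le_sum_of_subset (Finset.erase_subset _ _)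
      · -- j ∉ T, so T ⊆ A
        have hTA : T ⊆ A := by
          intro x hx
          rcases Finset.mem_insert.mp (hTsub.1 hx) with h | h
          · exact absurd (h ▸ hx) hjT
          · exact h
        rcases eq_or_ne T A with hTeq | hTne
        · -- cut set is {j}
          have hU : insert j A \ T = {j} := by
            subst hTeq
            ext x
            simp only [Finset.mem_sdiff, Finset.mem_insert, Finset.mem_singleton]
            constructor
            · rintro ⟨h1 | h1, h2⟩
              · exact h1
              · exact absurd h1 h2
            · rintro rfl
              exact ⟨Or.inl rfl, hj⟩
          rw [hU, cutCard_singleton_s1]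
          calc bb X j ≤ M := le_max_right _ _
            _ = rSum T r' := by rw [hTeq, hsumA]
        · have hTsubA : T ⊂ A := Finset.ssubset_iff_subset_ne.mpr ⟨hTA, hTne⟩
          have hcut := hr.2 T hT hTsubA
          have hUsub : A \ T ⊆ insert j A \ T := by
            intro x hx
            rw [Finset.mem_sdiff] at hx ⊢
            exact ⟨Finset.mem_insert_of_mem hx.1, hx.2⟩
          calc cutCard X (insert j A \ T) ≤ cutCard X (A \ T) := cutCard_anti X hUsub
            _ ≤ rSum T r := hcut
            _ ≤ rSum T r' := hrsumT T
  calc rho X (insert j A) ≤ rSum (insert j A) r' := rho_le X hrOK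
    _ = M := hsum'

/-- Chain lemma: `ρ(N) ≤ max(ρ(S), C)` where `C` bounds the demands of users outside `S`. -/
lemma rho_univ_le_chain {X : Fin n → Finset (Fin k)} :
    ∀ (m : ℕ) (S : Finset (Fin n)) (C : ℕ), (Finset.univ \ S).card = m →
      isCoalition X S → S.Nonempty → (∀ j, j ∉ S → bb X j ≤ C) →
      rho X Finset.univ ≤ max (rho X S) C := by
  classical
  intro m
  induction m with
  | zero =>
    intro S C hcard hS hSne hC
    have : Finset.univ ⊆ S := by
      rw [← Finset.sdiff_eq_empty_iff_subset]
      exact Finset.card_eq_zero.mp hcard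
    have hSu : S = Finset.univ := Finset.eq_univ_of_forall (fun x => this (Finset.mem_univ x))
    rw [← hSu]
    exact le_max_left _ _
  | succ m ih =>
    intro S C hcard hS hSne hC
    have hne : (Finset.univ \ S).Nonempty := by
      rw [← Finset.card_pos, hcard]; omega
    obtain ⟨j, hjd⟩ := hne
    have hjS : j ∉ S := (Finset.mem_sdiff.mp hjd).2
    have hcard' : (Finset.univ \ insert j S).card = m := by
      have : Finset.univ \ insert j S = (Finset.univ \ S).erase j := by
        ext x
        simp only [Finset.mem_sdiff, Finset.mem_insert, Finset.mem_erase, Finset.mem_univ,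
          true_and]
        tauto
      rw [this, Finset.card_erase_of_mem hjd, hcard]
      omega
    have hS' : isCoalition X (insert j S) := by
      intro x
      obtain ⟨i, hiS, hix⟩ := hS x
      exact ⟨i, Finset.mem_insert_of_mem hiS, hix⟩
    have hC' : ∀ j', j' ∉ insert j S → bb X j' ≤ C := by
      intro j' hj'
      exact hC j' (fun h => hj' (Finset.mem_insert_of_mem h))
    have h1 := ih (insert j S) C hcard' hS' (hSne.mono (Finset.subset_insert j S)) hC'
    have h2 : rho X (insert j S) ≤ max (rho X S) (bb X j) := rho_insert_le hS hjS hSne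
    have h3 : bb X j ≤ C := hC j hjS
    calc rho X Finset.univ ≤ max (rho X (insert j S)) C := h1
      _ ≤ max (max (rho X S) (bb X j)) C := max_le_max_right C h2
      _ ≤ max (rho X S) C := by
          rw [max_le_iff]
          constructor
          · rw [max_le_iff]
            exact ⟨le_max_left _ _, le_trans h3 (le_max_right _ _)⟩
          · exact le_max_right _ _

/-- ρ(N) is at most the total demand. -/
lemma rho_univ_le_sum_bb {X : Fin n → Finset (Fin k)} (hX : isCoalition X Finset.univ) :
    rho X Finset.univ ≤ ∑ i, bb X i := by
  classical
  -- choose a knower for each packet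
  have hw : ∀ x : Fin k, ∃ i, x ∈ X i := by
    intro x; obtain ⟨i, _, h⟩ := hX x; exact ⟨i, h⟩
  set w := fun x : Fin k => (hw x).choose with hwdef
  have hwmem : ∀ x, x ∈ X (w x) := fun x => (hw x).choose_spec
  set W := Finset.univ.biUnion (fun j : Fin n => Xbar X j) with hW
  set r := fun i : Fin n => (W.filter (fun x => w x = i)).card with hrdef
  have hfiber : ∀ T : Finset (Fin n), rSum T r = (W.filter (fun x => w x ∈ T)).card := by
    intro T
    unfold rSum
    rw [Finset.card_eq_sum_card_fiberwise (f := w) (s := W.filter (fun x => w x ∈ T)) (t := T)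
      (fun x hx => (Finset.mem_filter.mp hx).2)]
    apply Finset.sum_congr rfl
    intro i hiT
    have hfeq : ((W.filter (fun x => w x ∈ T)).filter (fun x => w x = i))
        = W.filter (fun x => w x = i) := by
      ext x
      simp only [Finset.mem_filter]
      constructor
      · rintro ⟨⟨h1, h2⟩, h3⟩; exact ⟨h1, h3⟩
      · rintro ⟨h1, h3⟩; exact ⟨⟨h1, h3 ▸ hiT⟩, h3⟩
    rw [hfeq]
  have hrOK : rateOK X Finset.univ r := by
    constructor
    · intro i hi; exact absurd (Finset.mem_univ i) hi
    · intro T hT hTsub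
      rw [hfiber T]
      apply Finset.card_le_card
      intro x hx
      rw [Finset.mem_filter] at hx
      have hcompl : (Finset.univ \ T).Nonempty := by
        rw [Finset.sdiff_nonempty]
        exact fun h => (Finset.ssubset_iff_subset_ne.mp hTsub).2
          (Finset.Subset.antisymm hTsub.1 h)
      obtain ⟨j0, hj0⟩ := hcompl
      have hxXbar : ∀ j ∈ Finset.univ \ T, x ∈ Xbar X j := hx.2
      refine Finset.mem_filter.mpr ⟨?_, ?_⟩
      · rw [hW, Finset.mem_biUnion]
        exact ⟨j0, Finset.mem_univ j0, hxXbar j0 hj0⟩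
      · by_contra hwT
        have hwx : w x ∈ Finset.univ \ T := Finset.mem_sdiff.mpr ⟨Finset.mem_univ _, hwT⟩
        have := hxXbar (w x) hwx
        rw [Xbar, Finset.mem_compl] at this
        exact this (hwmem x)
  have hsum : rSum Finset.univ r ≤ ∑ i, bb X i := by
    rw [hfiber Finset.univ]
    calc (W.filter (fun x => w x ∈ Finset.univ)).card ≤ W.card :=
          Finset.card_le_card (Finset.filter_subset _ _)
      _ ≤ ∑ j, (Xbar X j).card := Finset.card_biUnion_le
      _ = ∑ i, bb X i := rfl
  exact le_trans (rho_le X hrOK) hsum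

end P2
section P3
open Finset
variable {n k : ℕ}

lemma water_exists {X : Fin n → Finset (Fin k)} (hX : isCoalition X Finset.univ) :
    ∃ t : ℝ, 0 ≤ t ∧ ∑ i, max ((bb X i : ℝ) - t) 0 = (rho X Finset.univ : ℝ) := by
  classical
  set g : ℝ → ℝ := fun t => ∑ i, max ((bb X i : ℝ) - t) 0 with hg
  have hcont : Continuous g := by
    apply continuous_finset_sum
    intro i _
    exact (continuous_const.sub continuous_id).max continuous_const
  set B : ℝ := ∑ i, (bb X i : ℝ) with hB
  have hB0 : 0 ≤ B := Finset.sum_nonneg (fun i _ => Nat.cast_nonneg _)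
  have hgB : g B = 0 := by
    rw [hg]
    apply Finset.sum_eq_zero
    intro i _
    have h1 : (bb X i : ℝ) ≤ B := by
      apply Finset.single_le_sum (f := fun i => (bb X i : ℝ)) (fun i _ => Nat.cast_nonneg _)
        (Finset.mem_univ i)
    have : (bb X i : ℝ) - B ≤ 0 := by linarith
    exact max_eq_right this
  have hg0 : g 0 = B := by
    rw [hg]
    apply Finset.sum_congr rfl
    intro i _
    rw [sub_zero]
    exact max_eq_left (Nat.cast_nonneg _)
  have hmem : (rho X Finset.univ : ℝ) ∈ Set.Icc (g B) (g 0) := by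
    constructor
    · rw [hgB]; exact Nat.cast_nonneg _
    · rw [hg0, hB]
      have := rho_univ_le_sum_bb hX
      calc (rho X Finset.univ : ℝ) ≤ ((∑ i, bb X i : ℕ) : ℝ) := Nat.cast_le.mpr this
        _ = ∑ i, (bb X i : ℝ) := by push_cast; ring
  have hsurj := intermediate_value_Icc' hB0 hcont.continuousOn hmem
  obtain ⟨t, htmem, htval⟩ := hsurj
  exact ⟨t, htmem.1, htval⟩

lemma core_bound {X : Fin n → Finset (Fin k)} (hX : isCoalition X Finset.univ)
    {t : ℝ} (ht : 0 ≤ t)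
    (hsum : ∑ i, max ((bb X i : ℝ) - t) 0 = (rho X Finset.univ : ℝ))
    {S : Finset (Fin n)} (hS : isCoalition X S) (hSp : S ⊂ Finset.univ) (hSne : S.Nonempty) :
    ∑ i ∈ S, max ((bb X i : ℝ) - t) 0 ≤ (rho X S : ℝ) := by
  classical
  set q : Fin n → ℝ := fun i => max ((bb X i : ℝ) - t) 0 with hq
  have hq0 : ∀ i, 0 ≤ q i := fun i => le_max_right _ _
  have hcompl : (Finset.univ \ S).Nonempty := by
    rw [Finset.sdiff_nonempty]
    exact fun h => (Finset.ssubset_iff_subset_ne.mp hSp).2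
      (Finset.eq_univ_of_forall (fun x => h (Finset.mem_univ x)))
  obtain ⟨j0, hj0mem, hj0max⟩ := Finset.exists_max_image (Finset.univ \ S) (bb X) hcompl
  have hj0S : j0 ∉ S := (Finset.mem_sdiff.mp hj0mem).2
  have hchain := rho_univ_le_chain (Finset.univ \ S).card S (bb X j0) rfl hS hSne
    (fun j hj => hj0max j (Finset.mem_sdiff.mpr ⟨Finset.mem_univ j, hj⟩))
  rcases le_max_iff.mp hchain with hcase | hcase
  · -- ρ(N) ≤ ρ(S)
    calc ∑ i ∈ S, q i ≤ ∑ i, q i :=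
          Finset.sum_le_sum_of_subset_of_nonneg (Finset.subset_univ S) (fun i _ _ => hq0 i)
      _ = (rho X Finset.univ : ℝ) := hsum
      _ ≤ (rho X S : ℝ) := Nat.cast_le.mpr hcase
  · -- ρ(N) ≤ b_{j0}
    by_cases hall : ∀ i ∈ S, (bb X i : ℝ) ≤ t
    · have : ∑ i ∈ S, q i = 0 := by
        apply Finset.sum_eq_zero
        intro i hi
        exact max_eq_right (by linarith [hall i hi])
      rw [this]
      exact Nat.cast_nonneg _
    · push_neg at hall
      obtain ⟨i1, hi1S, hi1⟩ := hall
      -- S has at least 2 elements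
      have hScard : 2 ≤ S.card := by
        by_contra hlt
        push_neg at hlt
        interval_cases hcS : S.card
        · exact absurd (Finset.card_eq_zero.mp hcS ▸ hSne) (by simp [Finset.not_nonempty_empty])
        · obtain ⟨a, ha⟩ := Finset.card_eq_one.mp hcS
          have hai1 : i1 = a := by
            have := hi1S
            rw [ha, Finset.mem_singleton] at this
            exact this
          have hXa : bb X a = 0 := by
            unfold bb
            rw [Finset.card_eq_zero]
            rw [Finset.eq_empty_iff_forall_notMem]
            intro x hx
            obtain ⟨i, hiS, hix⟩ := hS x
            rw [ha, Finset.mem_singleton] at hiS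
            subst hiS
            rw [Xbar, Finset.mem_compl] at hx
            exact hx hix
          rw [hai1, hXa] at hi1
          simp at hi1
          linarith
      have hb1rho : (bb X i1 : ℝ) ≤ (rho X S : ℝ) := Nat.cast_le.mpr (bb_le_rho hi1S hScard)
      -- Σ_S q ≤ t
      have hSq : ∑ i ∈ S, q i ≤ t := by
        have hsub : S ⊆ Finset.univ.erase j0 := by
          intro x hx
          exact Finset.mem_erase.mpr ⟨fun h => hj0S (h ▸ hx), Finset.mem_univ x⟩
        have h1 : ∑ i ∈ S, q i ≤ ∑ i ∈ Finset.univ.erase j0, q i :=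
          Finset.sum_le_sum_of_subset_of_nonneg hsub (fun i _ _ => hq0 i)
        have h2 : ∑ i ∈ Finset.univ.erase j0, q i = (∑ i, q i) - q j0 := by
          rw [← Finset.add_sum_erase _ q (Finset.mem_univ j0)]
          ring
        have h3 : (bb X j0 : ℝ) - t ≤ q j0 := le_max_left _ _
        have h4 : (rho X Finset.univ : ℝ) ≤ (bb X j0 : ℝ) := Nat.cast_le.mpr hcase
        rw [h2, hsum] at h1
        linarith
      linarith
end P3
section P4
open Finset
variable {n : ℕ}

lemma exists_pos_of_sum_pos' {s : Finset (Fin n)} {f : Fin n → ℕ} (h : 0 < ∑ i ∈ s, f i) :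
    ∃ i ∈ s, 0 < f i := by
  by_contra hc
  push_neg at hc
  have : ∑ i ∈ s, f i = 0 := Finset.sum_eq_zero (fun i hi => Nat.le_zero.mp (hc i hi))
  omega

lemma two_le_sum (f : Fin n → ℕ) {x y : Fin n} (hxy : x ≠ y) :
    f x + f y ≤ ∑ i, f i := by
  classical
  rw [← Finset.add_sum_erase _ f (Finset.mem_univ x)]
  have hy : y ∈ Finset.univ.erase x := Finset.mem_erase.mpr ⟨hxy.symm, Finset.mem_univ y⟩
  have := Finset.single_le_sum (f := f) (fun i _ => Nat.zero_le _) hy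
  omega

lemma three_le_sum (f : Fin n → ℕ) {x y z : Fin n} (hxy : x ≠ y) (hxz : x ≠ z) (hyz : y ≠ z) :
    f x + f y + f z ≤ ∑ i, f i := by
  classical
  rw [← Finset.add_sum_erase _ f (Finset.mem_univ x)]
  have hy : y ∈ Finset.univ.erase x := Finset.mem_erase.mpr ⟨hxy.symm, Finset.mem_univ y⟩
  rw [← Finset.add_sum_erase _ f hy]
  have hz : z ∈ (Finset.univ.erase x).erase y :=
    Finset.mem_erase.mpr ⟨hyz.symm, Finset.mem_erase.mpr ⟨hxz.symm, Finset.mem_univ z⟩⟩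
  have := Finset.single_le_sum (f := f) (fun i _ => Nat.zero_le _) hz
  omega

/-- Selection step for the transportation construction. -/
lemma transport_select {T : ℕ} {a c : Fin n → ℕ}
    (ha : ∑ i, a i = T + 1) (hc : ∑ i, c i = T + 1) (hcap : ∀ i, a i + c i ≤ T + 1) :
    ∃ i j, i ≠ j ∧ 0 < a i ∧ 0 < c j ∧
      ∀ l, l ≠ i → l ≠ j → a l + c l ≤ T := by
  classical
  by_cases hH : ∃ l, a l + c l = T + 1
  · obtain ⟨l1, hl1⟩ := hH
    by_cases hH2 : ∃ l2, l2 ≠ l1 ∧ a l2 + c l2 = T + 1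
    · obtain ⟨l2, hl2ne, hl2⟩ := hH2
      have hothers : ∀ l, l ≠ l1 → l ≠ l2 → a l + c l = 0 := by
        intro l h1 h2
        have h3 := three_le_sum a hl2ne.symm h1.symm h2.symm  -- a l1 + a l2 + a l? fix order
        have h4 := three_le_sum c hl2ne.symm h1.symm h2.symm
        omega
      by_cases hal1 : 0 < a l1
      · have hcl2 : 0 < c l2 := by
          have := two_le_sum a hl2ne.symm  -- a l1 + a l2 ≤ T+1
          omega
        exact ⟨l1, l2, hl2ne.symm, hal1, hcl2,
          fun l h1 h2 => by have := hothers l h1 h2; omega⟩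
      · have hcl1 : c l1 = T + 1 := by omega
        have hcl2 : c l2 = 0 := by
          have := two_le_sum c hl2ne.symm
          omega
        have hal2 : 0 < a l2 := by omega
        exact ⟨l2, l1, hl2ne, hal2, by omega,
          fun l h1 h2 => by have := hothers l h2 h1; omega⟩
    · push_neg at hH2
      have hother : ∀ l, l ≠ l1 → a l + c l ≤ T := by
        intro l hl
        have h1 := hH2 l hl
        have h2 := hcap l
        omega
      by_cases hal1 : 0 < a l1
      · have hpos : 0 < ∑ l ∈ Finset.univ.erase l1, c l := by
          have h1 : c l1 + ∑ l ∈ Finset.univ.erase l1, c l = T + 1 := by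
            rw [Finset.add_sum_erase _ c (Finset.mem_univ l1)]; exact hc
          have := hcap l1
          omega
        obtain ⟨j, hjmem, hjpos⟩ := exists_pos_of_sum_pos' hpos
        have hjne : j ≠ l1 := (Finset.mem_erase.mp hjmem).1
        exact ⟨l1, j, hjne.symm, hal1, hjpos, fun l hl _ => hother l hl⟩
      · have hcl1 : 0 < c l1 := by omega
        have hpos : 0 < ∑ l ∈ Finset.univ.erase l1, a l := by
          have h1 : a l1 + ∑ l ∈ Finset.univ.erase l1, a l = T + 1 := by
            rw [Finset.add_sum_erase _ a (Finset.mem_univ l1)]; exact ha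
          omega
        obtain ⟨i, himem, hipos⟩ := exists_pos_of_sum_pos' hpos
        have hine : i ≠ l1 := (Finset.mem_erase.mp himem).1
        exact ⟨i, l1, hine, hipos, hcl1, fun l _ hl => hother l hl⟩
  · push_neg at hH
    have hother : ∀ l, a l + c l ≤ T := by
      intro l
      have h1 := hH l
      have h2 := hcap l
      omega
    have hpos : 0 < ∑ i, a i := by omega
    obtain ⟨i, _, hipos⟩ := exists_pos_of_sum_pos' (by rw [ha]; omega : 0 < ∑ i, a i)
    have hpos2 : 0 < ∑ l ∈ Finset.univ.erase i, c l := by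
      have h1 : c i + ∑ l ∈ Finset.univ.erase i, c l = T + 1 := by
        rw [Finset.add_sum_erase _ c (Finset.mem_univ i)]; exact hc
      have := hcap i
      omega
    obtain ⟨j, hjmem, hjpos⟩ := exists_pos_of_sum_pos' hpos2
    have hjne : j ≠ i := (Finset.mem_erase.mp hjmem).1
    exact ⟨i, j, hjne.symm, hipos, hjpos, fun l _ _ => hother l⟩

/-- Zero-diagonal transportation matrices over ℕ. -/
lemma transport_nat : ∀ (T : ℕ) (a c : Fin n → ℕ),
    (∑ i, a i) = T → (∑ i, c i) = T → (∀ i, a i + c i ≤ T) →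
    ∃ P : Fin n → Fin n → ℕ, (∀ i, P i i = 0) ∧
      (∀ i, ∑ j, P i j = a i) ∧ (∀ j, ∑ i, P i j = c j) := by
  classical
  intro T
  induction T with
  | zero =>
    intro a c ha hc _
    refine ⟨fun _ _ => 0, fun _ => rfl, fun i => ?_, fun j => ?_⟩
    · simp only [Finset.sum_const_zero]
      have : a i ≤ ∑ i, a i := Finset.single_le_sum (fun _ _ => Nat.zero_le _) (Finset.mem_univ i)
      omega
    · simp only [Finset.sum_const_zero]
      have : c j ≤ ∑ i, c i := Finset.single_le_sum (fun _ _ => Nat.zero_le _) (Finset.mem_univ j)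
      omega
  | succ T ih =>
    intro a c ha hc hcap
    obtain ⟨i, j, hij, hai, hcj, hsel⟩ := transport_select ha hc hcap
    set a' := Function.update a i (a i - 1) with ha'
    set c' := Function.update c j (c j - 1) with hc'
    have hsa : ∑ l, a' l = T := by
      rw [ha', Finset.sum_update_of_mem (Finset.mem_univ i)]
      have h2 : ∑ x ∈ Finset.univ, a x = ∑ x ∈ Finset.univ \ {i}, a x + a i :=
        Finset.sum_eq_sum_sdiff_singleton_add (Finset.mem_univ i) a
      omega
    have hsc : ∑ l, c' l = T := by
      rw [hc', Finset.sum_update_of_mem (Finset.mem_univ j)]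
      have h2 : ∑ x ∈ Finset.univ, c x = ∑ x ∈ Finset.univ \ {j}, c x + c j :=
        Finset.sum_eq_sum_sdiff_singleton_add (Finset.mem_univ j) c
      omega
    have hcap' : ∀ l, a' l + c' l ≤ T := by
      intro l
      rcases eq_or_ne l i with rfl | hli
      · have hci : c' l = c l := by rw [hc', Function.update_of_ne hij]
        have hal : a' l = a l - 1 := by rw [ha', Function.update_self]
        have := hcap l
        omega
      · have hal : a' l = a l := by rw [ha', Function.update_of_ne hli]
        rcases eq_or_ne l j with rfl | hlj
        · have hcl : c' l = c l - 1 := by rw [hc', Function.update_self]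
          have := hcap l
          omega
        · have hcl : c' l = c l := by rw [hc', Function.update_of_ne hlj]
          have := hsel l hli hlj
          omega
    obtain ⟨P', hPd, hPr, hPc⟩ := ih a' c' hsa hsc hcap'
    refine ⟨fun x y => P' x y + (if x = i then (if y = j then 1 else 0) else 0),
      ?_, ?_, ?_⟩
    · intro x
      rcases eq_or_ne x i with rfl | hxi
      · simp [hPd x, if_neg (Ne.symm hij), hij]
      · simp [hPd x, hxi]
    · intro x
      rw [Finset.sum_add_distrib, hPr x]
      rcases eq_or_ne x i with rfl | hxi
      · have hcg : ∑ y, (if x = x then (if y = j then (1:ℕ) else 0) else 0)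
            = ∑ y, (if y = j then (1:ℕ) else 0) :=
          Finset.sum_congr rfl (fun y _ => by rw [if_pos rfl])
        rw [hcg, Finset.sum_ite_eq' Finset.univ j (fun _ => (1:ℕ))]
        simp only [Finset.mem_univ, if_pos]
        rw [ha', Function.update_self]
        omega
      · simp only [if_neg hxi, Finset.sum_const_zero]
        rw [ha', Function.update_of_ne hxi]
        omega
    · intro y
      rw [Finset.sum_add_distrib, hPc y]
      rcases eq_or_ne y j with rfl | hyj
      · have hcg : ∑ x, (if x = i then (if y = y then (1:ℕ) else 0) else 0)
            = ∑ x, (if x = i then (1:ℕ) else 0) :=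
          Finset.sum_congr rfl (fun x _ => by rw [if_pos rfl])
        rw [hcg, Finset.sum_ite_eq' Finset.univ i (fun _ => (1:ℕ))]
        simp only [Finset.mem_univ, if_pos]
        rw [hc', Function.update_self]
        omega
      · have hz : ∑ x, (if x = i then (if y = j then (1:ℕ) else 0) else 0) = 0 := by
          apply Finset.sum_eq_zero
          intro x _
          rw [if_neg hyj]
          simp
        rw [hz, hc', Function.update_of_ne hyj]
        omega
end P4
section P5
open Finset
variable {n k : ℕ}

lemma bb_add_le {X : Fin n → Finset (Fin k)} (hn : 2 ≤ n) {r : Fin n → ℕ}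
    (hr : rateOK X Finset.univ r) (i : Fin n) :
    bb X i + r i ≤ rSum Finset.univ r := by
  classical
  have hcard : (Finset.univ : Finset (Fin n)).card = n := by simp
  have hi : i ∈ (Finset.univ : Finset (Fin n)) := Finset.mem_univ i
  have hT : ((Finset.univ : Finset (Fin n)).erase i).Nonempty := by
    rw [← Finset.card_pos, Finset.card_erase_of_mem hi, hcard]; omega
  have hTsub : (Finset.univ : Finset (Fin n)).erase i ⊂ Finset.univ :=
    Finset.erase_ssubset hi
  have hcut := hr.2 _ hT hTsub
  rw [Finset.sdiff_erase_self hi, cutCard_singleton_s1] at hcut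
  have : r i + ∑ x ∈ Finset.univ.erase i, r x = rSum Finset.univ r :=
    Finset.add_sum_erase _ r hi
  unfold rSum at this ⊢
  unfold rSum at hcut
  omega

/-- Existence of the payment matrix realizing water-filling charges `q` and
exact receipts `r`. -/
lemma exists_payment {X : Fin n → Finset (Fin k)} (hn : 2 ≤ n)
    {r : Fin n → ℕ} (hr : rateOK X Finset.univ r)
    (hrsum : rSum Finset.univ r = rho X Finset.univ)
    {t : ℝ} (ht : 0 ≤ t)
    (hsum : ∑ i, max ((bb X i : ℝ) - t) 0 = (rho X Finset.univ : ℝ)) :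
    ∃ p : Fin n → Fin n → ℝ, (∀ i, p i i = 0) ∧ (∀ i j, 0 ≤ p i j) ∧
      (∀ i, ∑ j, p i j = max ((bb X i : ℝ) - t) 0) ∧
      (∀ j, ∑ i, p i j = (r j : ℝ)) := by
  classical
  set R := rho X Finset.univ with hR
  set q : Fin n → ℝ := fun i => max ((bb X i : ℝ) - t) 0 with hq
  have hq0 : ∀ i, 0 ≤ q i := fun i => le_max_right _ _
  set A : Finset (Fin n) := Finset.univ.filter (fun i => t < (bb X i : ℝ)) with hA
  have hqA : ∀ i ∈ A, q i = (bb X i : ℝ) - t := by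
    intro i hi
    rw [hA, Finset.mem_filter] at hi
    exact max_eq_left (by linarith [hi.2])
  have hqA' : ∀ i ∉ A, q i = 0 := by
    intro i hi
    rw [hA, Finset.mem_filter] at hi
    push_neg at hi
    have := hi (Finset.mem_univ i)
    exact max_eq_right (by linarith)
  rcases Finset.eq_empty_or_nonempty A with hAe | hAne
  · -- all charges zero, R = 0, r = 0, p = 0
    have hq00 : ∀ i, q i = 0 := fun i => hqA' i (hAe ▸ Finset.notMem_empty i)
    have hR0 : (R : ℝ) = 0 := by
      rw [← hsum]
      exact Finset.sum_eq_zero (fun i _ => hq00 i)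
    have hRnat : R = 0 := by exact_mod_cast hR0
    have hr0 : ∀ j, r j = 0 := by
      intro j
      have h1 : r j ≤ rSum Finset.univ r :=
        Finset.single_le_sum (f := r) (fun _ _ => Nat.zero_le _) (Finset.mem_univ j)
      rw [hrsum] at h1
      omega
    refine ⟨fun _ _ => 0, fun _ => rfl, fun _ _ => le_refl 0, fun i => ?_, fun j => ?_⟩
    · simp only [Finset.sum_const_zero]
      exact (hq00 i).symm
    · simp only [Finset.sum_const_zero]
      rw [hr0 j, Nat.cast_zero]
  · set D := A.card with hD
    have hD1 : 1 ≤ D := Finset.card_pos.mpr hAne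
    set bA := ∑ l ∈ A, bb X l with hbA
    -- D * t = bA - R  (real)
    have hDt : (D : ℝ) * t = (bA : ℝ) - (R : ℝ) := by
      have h1 : ∑ i, q i = (R : ℝ) := hsum
      have h2 : ∑ i, q i = ∑ i ∈ A, q i := by
        rw [← Finset.sum_subset (Finset.subset_univ A)]
        intro x _ hx
        exact hqA' x hx
      have h3 : ∑ i ∈ A, q i = (bA : ℝ) - D * t := by
        rw [Finset.sum_congr rfl hqA, Finset.sum_sub_distrib, Finset.sum_const, hbA]
        push_cast
        ring
      rw [h2, h3] at h1
      linarith
    -- natural-number data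
    have hbAle : ∀ i ∈ A, bA ≤ D * bb X i + R := by
      intro i hi
      have h1 : 0 < q i := by
        rw [hA, Finset.mem_filter] at hi
        rw [hq]
        simp only
        rw [max_eq_left (by linarith [hi.2])]
        linarith [hi.2]
      have h2 : (D : ℝ) * q i = (D : ℝ) * (bb X i : ℝ) + (R:ℝ) - (bA:ℝ) := by
        rw [hqA i hi]
        rw [mul_sub, hDt]
        ring
      have h3 : (0:ℝ) < (D : ℝ) * q i := by
        apply mul_pos _ h1
        exact_mod_cast hD1
      rw [h2] at h3
      have : (bA : ℝ) < (D * bb X i + R : ℕ) := by push_cast; linarith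
      exact_mod_cast this.le
    set aN : Fin n → ℕ := fun i => if i ∈ A then D * bb X i + R - bA else 0 with haN
    set cN : Fin n → ℕ := fun j => D * r j with hcN
    have haNq : ∀ i, (aN i : ℝ) = D * q i := by
      intro i
      by_cases hi : i ∈ A
      · rw [haN]
        simp only [if_pos hi]
        have h2 : ((D * bb X i + R - bA : ℕ) : ℝ) = (D:ℝ) * (bb X i:ℝ) + (R:ℝ) - (bA:ℝ) := by
          rw [Nat.cast_sub (hbAle i hi)]
          push_cast
          ring
        rw [h2, hqA i hi, mul_sub, hDt]
        ring
      · rw [haN]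
        simp only [if_neg hi]
        rw [hqA' i hi]
        simp
    have hsaN : ∑ i, aN i = D * R := by
      have : ((∑ i, aN i : ℕ) : ℝ) = ((D * R : ℕ) : ℝ) := by
        push_cast
        rw [Finset.sum_congr rfl (fun i _ => haNq i), ← Finset.mul_sum, hsum]
      exact_mod_cast this
    have hscN : ∑ j, cN j = D * R := by
      rw [hcN, ← Finset.mul_sum]
      congr 1
    have hcap : ∀ i, aN i + cN i ≤ D * R := by
      intro i
      have h1 : bb X i + r i ≤ R := by
        have h0 := bb_add_le hn hr i
        rw [hrsum] at h0
        exact h0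
      have h2 : q i ≤ (bb X i : ℝ) := by
        rw [hq]
        simp only
        apply max_le _ (Nat.cast_nonneg _)
        linarith
      have h3 : (aN i : ℝ) + (cN i : ℝ) ≤ (D:ℝ) * (R:ℝ) := by
        rw [haNq i, hcN]
        push_cast
        have h4 : (D:ℝ) * q i + (D:ℝ) * (r i : ℝ) ≤ (D:ℝ) * ((bb X i:ℝ) + (r i:ℝ)) := by
          have hD0 : (0:ℝ) ≤ (D:ℝ) := Nat.cast_nonneg _
          nlinarith
        have h5 : (bb X i:ℝ) + (r i:ℝ) ≤ (R:ℝ) := by exact_mod_cast h1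
        have hD0 : (0:ℝ) ≤ (D:ℝ) := Nat.cast_nonneg _
        nlinarith
      have : ((aN i + cN i : ℕ):ℝ) ≤ ((D * R : ℕ):ℝ) := by push_cast; push_cast at h3; linarith
      exact_mod_cast this
    obtain ⟨P, hPd, hPr, hPc⟩ := transport_nat (D * R) aN cN hsaN hscN hcap
    refine ⟨fun x y => (P x y : ℝ) / D, ?_, ?_, ?_, ?_⟩
    · intro i; simp [hPd i]
    · intro i j; positivity
    · intro i
      have hDne : (D:ℝ) ≠ 0 := by
        have : (0:ℝ) < (D:ℝ) := by exact_mod_cast hD1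
        linarith
      have h1 : ∑ j, (P i j : ℝ) / (D:ℝ) = ((∑ j, P i j : ℕ) : ℝ) / D := by
        rw [← Finset.sum_div]
        norm_cast
      have h2 : q i = (aN i : ℝ) / D := by
        rw [haNq i]
        field_simp
      calc ∑ j, (P i j : ℝ) / (D:ℝ) = ((∑ j, P i j : ℕ) : ℝ) / D := h1
        _ = (aN i : ℝ) / D := by rw [hPr i]
        _ = q i := h2.symm
    · intro j
      have hDne : (D:ℝ) ≠ 0 := by
        have : (0:ℝ) < (D:ℝ) := by exact_mod_cast hD1
        linarith
      have h1 : ∑ i, (P i j : ℝ) / (D:ℝ) = ((∑ i, P i j : ℕ) : ℝ) / D := by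
        rw [← Finset.sum_div]
        norm_cast
      calc ∑ i, (P i j : ℝ) / (D:ℝ) = ((∑ i, P i j : ℕ) : ℝ) / D := h1
        _ = (cN j : ℝ) / D := by rw [hPc j]
        _ = (r j : ℝ) := by
            rw [hcN]
            push_cast
            field_simp
end P5
section P6
open Finset
variable {n k : ℕ}

/-- Payments internal to `S` cancel in the net-transfer sum. -/
lemma sum_net_zero {S : Finset (Fin n)} {p : Fin n → Fin n → ℝ}
    (hPM : isPayMatrix p) (hOK : payOK S p) :
    ∑ i ∈ S, (pPlus p i - pMinus p i) = 0 := by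
  classical
  have hplus : ∀ i ∈ S, pPlus p i = ∑ j ∈ S, p j i := by
    intro i hiS
    unfold pPlus
    rw [← Finset.sum_erase (s := S) (f := fun j => p j i) (hPM.2 i)]
    symm
    apply Finset.sum_subset
    · intro x hx
      exact Finset.mem_erase.mpr ⟨(Finset.mem_erase.mp hx).1, Finset.mem_univ x⟩
    · intro x hx hxS
      have hxS' : x ∉ S := by
        intro hc
        exact hxS (Finset.mem_erase.mpr ⟨(Finset.mem_erase.mp hx).1, hc⟩)
      exact (hOK i hiS x hxS').2
  have hminus : ∀ i ∈ S, pMinus p i = ∑ j ∈ S, p i j := by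
    intro i hiS
    unfold pMinus
    rw [← Finset.sum_erase (s := S) (f := fun j => p i j) (hPM.2 i)]
    symm
    apply Finset.sum_subset
    · intro x hx
      exact Finset.mem_erase.mpr ⟨(Finset.mem_erase.mp hx).1, Finset.mem_univ x⟩
    · intro x hx hxS
      have hxS' : x ∉ S := by
        intro hc
        exact hxS (Finset.mem_erase.mpr ⟨(Finset.mem_erase.mp hx).1, hc⟩)
      exact (hOK i hiS x hxS').1
  have h1 : ∑ i ∈ S, (pPlus p i - pMinus p i)
      = ∑ i ∈ S, ∑ j ∈ S, p j i - ∑ i ∈ S, ∑ j ∈ S, p i j := by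
    rw [← Finset.sum_sub_distrib]
    apply Finset.sum_congr rfl
    intro i hi
    rw [hplus i hi, hminus i hi]
  rw [h1, Finset.sum_comm]
  ring

/-- Total utility of a coalition under its own rational pair. -/
lemma sum_util_eq {X : Fin n → Finset (Fin k)} {S : Finset (Fin n)}
    {r : Fin n → ℕ} {p : Fin n → Fin n → ℝ}
    (hPM : isPayMatrix p) (hOK : payOK S p) :
    ∑ i ∈ S, util X r p i = ∑ i ∈ S, (bb X i : ℝ) - (rSum S r : ℝ) := by
  classical
  have h1 : ∑ i ∈ S, util X r p i
      = ∑ i ∈ S, (pPlus p i - pMinus p i) + ∑ i ∈ S, ((bb X i:ℝ) - (r i:ℝ)) := by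
    rw [← Finset.sum_add_distrib]
    apply Finset.sum_congr rfl
    intro i _
    unfold util bb
    ring
  rw [h1, sum_net_zero hPM hOK, zero_add, Finset.sum_sub_distrib]
  unfold rSum
  push_cast
  ring

/-- `pSum` dominates `rSum` for rational pairs on the grand coalition. -/
lemma pSum_ge {X : Fin n → Finset (Fin k)} {r : Fin n → ℕ} {p : Fin n → Fin n → ℝ}
    (hPM : isPayMatrix p) (hrat : rational X Finset.univ r p) :
    (rSum Finset.univ r : ℝ) ≤ pSum Finset.univ p := by
  classical
  have h1 : pSum Finset.univ p = ∑ j, pPlus p j := by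
    unfold pSum pPlus
    rw [Finset.sum_comm]
    apply Finset.sum_congr rfl
    intro j _
    rw [← Finset.sum_erase (s := Finset.univ) (f := fun i => p i j) (hPM.2 j)]
  rw [h1]
  unfold rSum
  push_cast
  apply Finset.sum_le_sum
  intro i _
  exact (hrat i (Finset.mem_univ i)).1

/-- The constructed water-filling pair is optimal, with both sums equal to `ρ(N)`. -/
lemma exists_R_pair {X : Fin n → Finset (Fin k)} (hn : 2 ≤ n) (hk : 1 ≤ k)
    (hX : isCoalition X Finset.univ) :
    ∃ (r : Fin n → ℕ) (p : Fin n → Fin n → ℝ),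
      feasible X r p ∧ rSum Finset.univ r = rho X Finset.univ ∧
      pSum Finset.univ p = (rho X Finset.univ : ℝ) := by
  classical
  obtain ⟨r, hrOK, hrsum⟩ := rho_spec X Finset.univ
  obtain ⟨t, ht, hsum⟩ := water_exists hX
  obtain ⟨p, hPd, hPn, hProw, hPcol⟩ := exists_payment hn hrOK hrsum ht hsum
  have hPM : isPayMatrix p := ⟨hPn, hPd⟩
  have hplus : ∀ i, pPlus p i = (r i : ℝ) := by
    intro i
    unfold pPlus
    rw [Finset.sum_erase (s := Finset.univ) (f := fun j => p j i) (hPd i)]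
    exact hPcol i
  have hminus : ∀ i, pMinus p i = max ((bb X i : ℝ) - t) 0 := by
    intro i
    unfold pMinus
    rw [Finset.sum_erase (s := Finset.univ) (f := fun j => p i j) (hPd i)]
    exact hProw i
  have hminus_nonneg : ∀ i, 0 ≤ pMinus p i := by
    intro i; rw [hminus i]; exact le_max_right _ _
  have hminus_le : ∀ i, pMinus p i ≤ (bb X i:ℝ) := by
    intro i
    rw [hminus i]
    apply max_le _ (Nat.cast_nonneg _)
    linarith
  have hrat : rational X Finset.univ r p := by
    intro i _
    refine ⟨le_of_eq (hplus i).symm, ?_⟩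
    unfold bb at hminus_le
    unfold Xbar at hminus_le ⊢
    exact hminus_le i
  have hutil : ∀ i, util X r p i = (bb X i:ℝ) - pMinus p i := by
    intro i
    unfold util
    rw [hplus i]
    unfold bb Xbar at *
    ring
  have hOKuniv : payOK Finset.univ p := by
    intro i _ j hj
    exact absurd (Finset.mem_univ j) hj
  have hfeas : feasible X r p := by
    refine ⟨hrOK, hPM, hOKuniv, hrat, ?_⟩
    rintro ⟨S, r', p', hSsub, hCoS, hrOK', hPM', hpOK', hrat', hle, i0, hi0, hlt⟩
    have hSne : S.Nonempty := ⟨i0, hi0⟩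
    have hcore : ∑ i ∈ S, pMinus p i ≤ (rho X S : ℝ) := by
      have := core_bound hX ht hsum hCoS hSsub hSne
      calc ∑ i ∈ S, pMinus p i = ∑ i ∈ S, max ((bb X i:ℝ) - t) 0 :=
            Finset.sum_congr rfl (fun i _ => hminus i)
        _ ≤ (rho X S : ℝ) := this
    have hstrict : ∑ i ∈ S, util X r p i < ∑ i ∈ S, util X r' p' i :=
      Finset.sum_lt_sum (fun i hi => hle i hi) ⟨i0, hi0, hlt⟩
    have hrhs : ∑ i ∈ S, util X r' p' i ≤ ∑ i ∈ S, (bb X i:ℝ) - (rho X S : ℝ) := by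
      rw [sum_util_eq hPM' hpOK']
      have : (rho X S : ℝ) ≤ (rSum S r' : ℝ) := Nat.cast_le.mpr (rho_le X hrOK')
      linarith
    have hlhs : ∑ i ∈ S, (bb X i:ℝ) - (rho X S : ℝ) ≤ ∑ i ∈ S, util X r p i := by
      have h2 : ∑ i ∈ S, util X r p i = ∑ i ∈ S, (bb X i:ℝ) - ∑ i ∈ S, pMinus p i := by
        rw [Finset.sum_congr rfl (fun i (_ : i ∈ S) => hutil i), Finset.sum_sub_distrib]
      rw [h2]
      linarith
    linarith
  have hpsum : pSum Finset.univ p = (rho X Finset.univ : ℝ) := by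
    unfold pSum
    rw [Finset.sum_comm]
    have h1 : ∀ j, ∑ i, p i j = (r j:ℝ) := hPcol
    rw [Finset.sum_congr rfl (fun j (_ : j ∈ Finset.univ) => h1 j)]
    rw [← hrsum]
    unfold rSum
    push_cast
    rfl
  exact ⟨r, p, hfeas, hrsum, hpsum⟩

/-- Characterization of optimality: feasibility plus both sums equal `ρ(N)`. -/
lemma optimal_iff {X : Fin n → Finset (Fin k)} (hn : 2 ≤ n) (hk : 1 ≤ k)
    (hX : isCoalition X Finset.univ) (r : Fin n → ℕ) (p : Fin n → Fin n → ℝ) :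
    optimal X r p ↔ feasible X r p ∧ rSum Finset.univ r = rho X Finset.univ ∧
      pSum Finset.univ p = (rho X Finset.univ : ℝ) := by
  classical
  obtain ⟨r0, p0, hf0, hr0, hp0⟩ := exists_R_pair hn hk hX
  constructor
  · rintro ⟨hfeas, hnb⟩
    have hrge : rho X Finset.univ ≤ rSum Finset.univ r := rho_le X hfeas.1
    have hpge : (rSum Finset.univ r : ℝ) ≤ pSum Finset.univ p :=
      pSum_ge hfeas.2.1 hfeas.2.2.2.1
    refine ⟨hfeas, ?_, ?_⟩
    · by_contra hne
      have hlt : rSum Finset.univ r0 < rSum Finset.univ r := by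
        rw [hr0]; omega
      exact hnb ⟨r0, p0, hf0, Or.inl hlt⟩
    · have h2 : (rho X Finset.univ : ℝ) ≤ pSum Finset.univ p := by
        calc (rho X Finset.univ : ℝ) ≤ (rSum Finset.univ r : ℝ) := Nat.cast_le.mpr hrge
          _ ≤ pSum Finset.univ p := hpge
      by_contra hne
      have hlt : pSum Finset.univ p0 < pSum Finset.univ p := by
        rw [hp0]
        rcases lt_or_eq_of_le h2 with h | h
        · exact h
        · exact absurd h.symm hne
      exact hnb ⟨r0, p0, hf0, Or.inr hlt⟩
  · rintro ⟨hfeas, hrs, hps⟩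
    refine ⟨hfeas, ?_⟩
    rintro ⟨r', p', hf', hbad⟩
    have h1 : rho X Finset.univ ≤ rSum Finset.univ r' := rho_le X hf'.1
    have h2 : (rSum Finset.univ r' : ℝ) ≤ pSum Finset.univ p' :=
      pSum_ge hf'.2.1 hf'.2.2.2.1
    rcases hbad with h | h
    · rw [hrs] at h; omega
    · rw [hps] at h
      have : (rho X Finset.univ:ℝ) ≤ pSum Finset.univ p' := by
        calc (rho X Finset.univ:ℝ) ≤ (rSum Finset.univ r':ℝ) := Nat.cast_le.mpr h1
          _ ≤ _ := h2
      linarith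

/-- All optimal pairs have the same total utility. -/
lemma optimal_sum_util {X : Fin n → Finset (Fin k)} (hn : 2 ≤ n) (hk : 1 ≤ k)
    (hX : isCoalition X Finset.univ) {r : Fin n → ℕ} {p : Fin n → Fin n → ℝ}
    (h : optimal X r p) :
    ∑ i, util X r p i = ∑ i, (bb X i:ℝ) - (rho X Finset.univ : ℝ) := by
  obtain ⟨hfeas, hrs, _⟩ := (optimal_iff hn hk hX r p).mp h
  rw [sum_util_eq hfeas.2.1 hfeas.2.2.1, hrs]
end P6
section P7
open Finset
variable {n k : ℕ}

lemma util_nonneg {X : Fin n → Finset (Fin k)} {r : Fin n → ℕ} {p : Fin n → Fin n → ℝ}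
    (hrat : rational X Finset.univ r p) (i : Fin n) : 0 ≤ util X r p i := by
  obtain ⟨h1, h2⟩ := hrat i (Finset.mem_univ i)
  unfold util
  have := sub_nonneg.mpr h1
  have := sub_nonneg.mpr h2
  linarith

/-- pPlus of a pointwise sum. -/
lemma pPlus_add (p g : Fin n → Fin n → ℝ) (l : Fin n) :
    pPlus (fun a b => p a b + g a b) l = pPlus p l + ∑ j ∈ Finset.univ.erase l, g j l := by
  unfold pPlus
  rw [← Finset.sum_add_distrib]

lemma pMinus_add (p g : Fin n → Fin n → ℝ) (l : Fin n) :
    pMinus (fun a b => p a b + g a b) l = pMinus p l + ∑ j ∈ Finset.univ.erase l, g l j := by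
  unfold pMinus
  rw [← Finset.sum_add_distrib]

lemma util_add {X : Fin n → Finset (Fin k)} (r : Fin n → ℕ) (p g : Fin n → Fin n → ℝ)
    (i : Fin n) :
    util X r (fun a b => p a b + g a b) i
      = util X r p i + (∑ j ∈ Finset.univ.erase i, g j i) - (∑ j ∈ Finset.univ.erase i, g i j) := by
  unfold util
  rw [pPlus_add, pMinus_add]
  ring

/-- Strictification: a weakly dominating deviation can be made strictly dominating. -/
lemma strictify {X : Fin n → Finset (Fin k)} {S : Finset (Fin n)} {r' : Fin n → ℕ}
    {p' : Fin n → Fin n → ℝ} {v : Fin n → ℝ}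
    (hCoS : isCoalition X S) (hPM : isPayMatrix p') (hOK : payOK S p')
    (hrat : rational X S r' p')
    (hv0 : ∀ i ∈ S, 0 ≤ v i) (hle : ∀ i ∈ S, v i ≤ util X r' p' i)
    (hstrict : ∃ i ∈ S, v i < util X r' p' i) :
    ∃ p'' : Fin n → Fin n → ℝ, isPayMatrix p'' ∧ payOK S p'' ∧ rational X S r' p'' ∧
      ∀ i ∈ S, v i < util X r' p'' i := by
  classical
  obtain ⟨i0, hi0, hlt⟩ := hstrict
  set ε : ℝ := util X r' p' i0 - v i0 with hε
  have hε0 : 0 < ε := by rw [hε]; linarith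
  set s : ℝ := ((Xbar X i0).card : ℝ) - pMinus p' i0 with hs
  set tt : ℝ := pPlus p' i0 - (r' i0 : ℝ) with htt
  have hs0 : 0 ≤ s := sub_nonneg.mpr (hrat i0 hi0).2
  have htt0 : 0 ≤ tt := sub_nonneg.mpr (hrat i0 hi0).1
  have hutil_i0 : util X r' p' i0 = tt + s := by unfold util; rw [hs, htt]; try ring
  have hst : ε ≤ s + tt := by
    have := hv0 i0 hi0
    rw [hε, hutil_i0]
    linarith
  set m : ℕ := (S.erase i0).card with hm
  rcases Nat.eq_zero_or_pos m with hm0 | hmpos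
  · -- S = {i0}; derive a contradiction
    exfalso
    have hSsingle : ∀ x ∈ S, x = i0 := by
      intro x hx
      by_contra hne
      have : x ∈ S.erase i0 := Finset.mem_erase.mpr ⟨hne, hx⟩
      rw [hm] at hm0
      rw [Finset.card_eq_zero] at hm0
      rw [hm0] at this
      exact absurd this (Finset.notMem_empty x)
    have hbb0 : (Xbar X i0).card = 0 := by
      rw [Finset.card_eq_zero, Finset.eq_empty_iff_forall_notMem]
      intro x hx
      obtain ⟨i, hiS, hix⟩ := hCoS x
      have := hSsingle i hiS
      subst this
      rw [Xbar, Finset.mem_compl] at hx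
      exact hx hix
    have hpl : pPlus p' i0 = 0 := by
      unfold pPlus
      apply Finset.sum_eq_zero
      intro j hj
      have hjne : j ≠ i0 := (Finset.mem_erase.mp hj).1
      have hjS : j ∉ S := fun hc => hjne (hSsingle j hc)
      exact (hOK i0 hi0 j hjS).2
    have hmn : 0 ≤ pMinus p' i0 := by
      unfold pMinus
      apply Finset.sum_nonneg
      intro j _
      exact hPM.1 i0 j
    have : util X r' p' i0 ≤ 0 := by
      unfold util
      rw [hpl, hbb0]
      push_cast
      have : (0:ℝ) ≤ (r' i0 : ℝ) := Nat.cast_nonneg _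
      linarith
    linarith [hv0 i0 hi0]
  · have hmR : (0:ℝ) < (m:ℝ) := by exact_mod_cast hmpos
    rcases lt_or_ge 0 s with hspos | hsle
    · -- Case A : use the p⁻ slack of i0
      set δ : ℝ := min (s / m) (ε / (2 * m)) with hδ
      have hδ0 : 0 < δ := lt_min (div_pos hspos hmR) (div_pos hε0 (by linarith))
      have hδs : (m:ℝ) * δ ≤ s := by
        have : δ ≤ s / m := min_le_left _ _
        calc (m:ℝ) * δ ≤ (m:ℝ) * (s / m) := by nlinarith
          _ = s := by field_simp
      have hδε : (m:ℝ) * δ ≤ ε / 2 := by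
        have : δ ≤ ε / (2*m) := min_le_right _ _
        calc (m:ℝ) * δ ≤ (m:ℝ) * (ε / (2*m)) := by nlinarith
          _ = ε / 2 := by
              field_simp
              try ring
      set g : Fin n → Fin n → ℝ :=
        fun a b => if a = i0 ∧ b ∈ S.erase i0 then δ else 0 with hg
      have hg_nonneg : ∀ a b, 0 ≤ g a b := by
        intro a b; rw [hg]; dsimp only; split <;> linarith
      refine ⟨fun a b => p' a b + g a b, ⟨?_, ?_⟩, ?_, ?_, ?_⟩
      · intro a b; exact add_nonneg (hPM.1 a b) (hg_nonneg a b)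
      · intro a
        have hga : g a a = 0 := by
          have hneg : ¬(a = i0 ∧ a ∈ S.erase i0) := by
            rintro ⟨rfl, hmem⟩
            exact (Finset.mem_erase.mp hmem).1 rfl
          rw [hg]; dsimp only
          rw [if_neg hneg]
        show p' a a + g a a = 0
        rw [hga, hPM.2 a, add_zero]
      · intro i hiS j hjS
        have h1 : g i j = 0 := by
          have hneg : ¬(i = i0 ∧ j ∈ S.erase i0) := by
            rintro ⟨_, hmem⟩
            exact hjS (Finset.mem_of_mem_erase hmem)
          rw [hg]; dsimp only
          rw [if_neg hneg]
        have h2 : g j i = 0 := by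
          have hneg : ¬(j = i0 ∧ i ∈ S.erase i0) := by
            rintro ⟨rfl, _⟩
            exact hjS hi0
          rw [hg]; dsimp only
          rw [if_neg hneg]
        constructor
        · show p' i j + g i j = 0
          rw [h1, (hOK i hiS j hjS).1, add_zero]
        · show p' j i + g j i = 0
          rw [h2, (hOK i hiS j hjS).2, add_zero]
      · -- rationality
        intro i hiS
        have hcol : ∑ j ∈ Finset.univ.erase i, g j i = if i ∈ S.erase i0 then δ else 0 := by
          by_cases hi : i ∈ S.erase i0
          · rw [if_pos hi]
            have : ∀ j ∈ Finset.univ.erase i, g j i = if j = i0 then δ else 0 := by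
              intro j _
              rw [hg]; dsimp only
              by_cases hj : j = i0
              · rw [if_pos ⟨hj, hi⟩, if_pos hj]
              · rw [if_neg (fun hc => hj hc.1), if_neg hj]
            rw [Finset.sum_congr rfl this, Finset.sum_ite_eq' _ i0 (fun _ => δ)]
            rw [if_pos]
            exact Finset.mem_erase.mpr ⟨fun hc => (Finset.mem_erase.mp hi).1 hc.symm,
              Finset.mem_univ i0⟩
          · rw [if_neg hi]
            apply Finset.sum_eq_zero
            intro j _
            rw [hg]; dsimp only
            rw [if_neg (fun hc => hi hc.2)]
        have hrow : ∑ j ∈ Finset.univ.erase i, g i j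
            = if i = i0 then (m:ℝ) * δ else 0 := by
          by_cases hi : i = i0
          · rw [if_pos hi]
            subst hi
            have : ∀ j ∈ Finset.univ.erase i, g i j
                = if j ∈ S.erase i then δ else 0 := by
              intro j _
              rw [hg]; dsimp only
              by_cases hj : j ∈ S.erase i
              · rw [if_pos ⟨rfl, hj⟩, if_pos hj]
              · rw [if_neg (fun hc => hj hc.2), if_neg hj]
            rw [Finset.sum_congr rfl this, Finset.sum_ite_mem]
            have hinter : (Finset.univ.erase i) ∩ (S.erase i) = S.erase i := by
              apply Finset.inter_eq_right.mpr
              intro x hx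
              exact Finset.mem_erase.mpr ⟨(Finset.mem_erase.mp hx).1, Finset.mem_univ x⟩
            rw [hinter, Finset.sum_const, ← hm, nsmul_eq_mul]
          · rw [if_neg hi]
            apply Finset.sum_eq_zero
            intro j _
            rw [hg]; dsimp only
            rw [if_neg (fun hc => hi hc.1)]
        constructor
        · rw [pPlus_add, hcol]
          have h1 := (hrat i hiS).1
          split <;> linarith
        · rw [pMinus_add, hrow]
          have h2 := (hrat i hiS).2
          by_cases hi : i = i0
          · rw [if_pos hi]
            subst hi
            rw [hs] at hδs
            linarith
          · rw [if_neg hi]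
            linarith
      · -- strict utility gain
        intro i hiS
        have hcol : ∑ j ∈ Finset.univ.erase i, g j i = if i ∈ S.erase i0 then δ else 0 := by
          by_cases hi : i ∈ S.erase i0
          · rw [if_pos hi]
            have : ∀ j ∈ Finset.univ.erase i, g j i = if j = i0 then δ else 0 := by
              intro j _
              rw [hg]; dsimp only
              by_cases hj : j = i0
              · rw [if_pos ⟨hj, hi⟩, if_pos hj]
              · rw [if_neg (fun hc => hj hc.1), if_neg hj]
            rw [Finset.sum_congr rfl this, Finset.sum_ite_eq' _ i0 (fun _ => δ)]
            rw [if_pos]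
            exact Finset.mem_erase.mpr ⟨fun hc => (Finset.mem_erase.mp hi).1 hc.symm,
              Finset.mem_univ i0⟩
          · rw [if_neg hi]
            apply Finset.sum_eq_zero
            intro j _
            rw [hg]; dsimp only
            rw [if_neg (fun hc => hi hc.2)]
        have hrow : ∑ j ∈ Finset.univ.erase i, g i j
            = if i = i0 then (m:ℝ) * δ else 0 := by
          by_cases hi : i = i0
          · rw [if_pos hi]
            subst hi
            have : ∀ j ∈ Finset.univ.erase i, g i j
                = if j ∈ S.erase i then δ else 0 := by
              intro j _
              rw [hg]; dsimp only
              by_cases hj : j ∈ S.erase i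
              · rw [if_pos ⟨rfl, hj⟩, if_pos hj]
              · rw [if_neg (fun hc => hj hc.2), if_neg hj]
            rw [Finset.sum_congr rfl this, Finset.sum_ite_mem]
            have hinter : (Finset.univ.erase i) ∩ (S.erase i) = S.erase i := by
              apply Finset.inter_eq_right.mpr
              intro x hx
              exact Finset.mem_erase.mpr ⟨(Finset.mem_erase.mp hx).1, Finset.mem_univ x⟩
            rw [hinter, Finset.sum_const, ← hm, nsmul_eq_mul]
          · rw [if_neg hi]
            apply Finset.sum_eq_zero
            intro j _
            rw [hg]; dsimp only
            rw [if_neg (fun hc => hi hc.1)]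
        rw [util_add, hcol, hrow]
        by_cases hi : i = i0
        · subst hi
          rw [if_neg (fun hc => (Finset.mem_erase.mp hc).1 rfl), if_pos rfl]
          rw [hε] at hδε
          linarith
        · rw [if_pos (Finset.mem_erase.mpr ⟨hi, hiS⟩), if_neg hi]
          have := hle i hiS
          linarith
    · -- Case B : s = 0, use the p⁺ slack of i0 routed through a payer j0
      have hseq : s = 0 := le_antisymm hsle hs0
      have httε : ε ≤ tt := by rw [hseq] at hst; linarith
      have hplpos : 0 < ∑ j ∈ Finset.univ.erase i0, p' j i0 := by
        have h1 : pPlus p' i0 = ∑ j ∈ Finset.univ.erase i0, p' j i0 := rfl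
        have h2 : (0:ℝ) ≤ (r' i0 : ℝ) := Nat.cast_nonneg _
        rw [htt] at httε
        rw [← h1]
        linarith
      have hex : ∃ j0 ∈ Finset.univ.erase i0, 0 < p' j0 i0 := by
        by_contra hc
        push_neg at hc
        have : ∑ j ∈ Finset.univ.erase i0, p' j i0 ≤ 0 :=
          Finset.sum_nonpos (fun j hj => hc j hj)
        linarith
      obtain ⟨j0, hj0mem, hj0pos⟩ := hex
      have hj0ne : j0 ≠ i0 := (Finset.mem_erase.mp hj0mem).1
      have hj0S : j0 ∈ S := by
        by_contra hc
        have := (hOK i0 hi0 j0 hc).2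
        linarith
      set m' : ℕ := (S.erase j0).card with hm'
      have hmm' : m' = m := by
        rw [hm', hm, Finset.card_erase_of_mem hj0S, Finset.card_erase_of_mem hi0]
      have hm'R : (0:ℝ) < (m':ℝ) := by rw [hmm']; exact hmR
      set η : ℝ := min (ε/2) (p' j0 i0) with hη
      have hη0 : 0 < η := lt_min (by linarith) hj0pos
      have hηε : η ≤ ε / 2 := min_le_left _ _
      have hηp : η ≤ p' j0 i0 := min_le_right _ _
      set δ : ℝ := η / (2 * m') with hδ
      have hδ0 : 0 < δ := div_pos hη0 (by linarith)
      have hmδ : (m':ℝ) * δ = η / 2 := by rw [hδ]; field_simp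
      set g : Fin n → Fin n → ℝ :=
        fun a b => (if a = j0 ∧ b ∈ S.erase j0 then δ else 0)
          + (if a = j0 ∧ b = i0 then -η else 0) with hg
      have hi0erase : i0 ∈ S.erase j0 := Finset.mem_erase.mpr ⟨fun hc => hj0ne hc.symm, hi0⟩
      -- column sums of g
      have hcol : ∀ i, ∑ j ∈ Finset.univ.erase i, g j i
          = (if i ∈ S.erase j0 then δ else 0) + (if i = i0 then -η else 0) := by
        intro i
        rw [hg]
        dsimp only
        rw [Finset.sum_add_distrib]
        congr 1
        · by_cases hi : i ∈ S.erase j0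
          · rw [if_pos hi]
            have : ∀ j ∈ Finset.univ.erase i, (if j = j0 ∧ i ∈ S.erase j0 then δ else 0)
                = if j = j0 then δ else 0 := by
              intro j _
              by_cases hj : j = j0
              · rw [if_pos ⟨hj, hi⟩, if_pos hj]
              · rw [if_neg (fun hc => hj hc.1), if_neg hj]
            rw [Finset.sum_congr rfl this, Finset.sum_ite_eq' _ j0 (fun _ => δ), if_pos]
            refine Finset.mem_erase.mpr ⟨?_, Finset.mem_univ j0⟩
            intro hc
            exact (Finset.mem_erase.mp hi).1 hc.symm
          · rw [if_neg hi]
            apply Finset.sum_eq_zero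
            intro j _
            rw [if_neg (fun hc => hi hc.2)]
        · by_cases hi : i = i0
          · rw [if_pos hi]
            have : ∀ j ∈ Finset.univ.erase i, (if j = j0 ∧ i = i0 then -η else 0)
                = if j = j0 then -η else 0 := by
              intro j _
              by_cases hj : j = j0
              · rw [if_pos ⟨hj, hi⟩, if_pos hj]
              · rw [if_neg (fun hc => hj hc.1), if_neg hj]
            rw [Finset.sum_congr rfl this, Finset.sum_ite_eq' _ j0 (fun _ => -η), if_pos]
            refine Finset.mem_erase.mpr ⟨?_, Finset.mem_univ j0⟩
            intro hc
            rw [hi] at hc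
            exact hj0ne hc
          · rw [if_neg hi]
            apply Finset.sum_eq_zero
            intro j _
            rw [if_neg (fun hc => hi hc.2)]
      -- row sums of g
      have hrow : ∀ i, ∑ j ∈ Finset.univ.erase i, g i j
          = if i = j0 then (m':ℝ) * δ - η else 0 := by
        intro i
        rw [hg]
        dsimp only
        rw [Finset.sum_add_distrib]
        by_cases hi : i = j0
        · rw [if_pos hi]
          subst hi
          have h1 : ∀ j ∈ Finset.univ.erase i, (if i = i ∧ j ∈ S.erase i then δ else 0)
              = if j ∈ S.erase i then δ else 0 := by
            intro j _
            by_cases hj : j ∈ S.erase i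
            · rw [if_pos ⟨rfl, hj⟩, if_pos hj]
            · rw [if_neg (fun hc => hj hc.2), if_neg hj]
          have h2 : ∀ j ∈ Finset.univ.erase i, (if i = i ∧ j = i0 then -η else 0)
              = if j = i0 then -η else 0 := by
            intro j _
            by_cases hj : j = i0
            · rw [if_pos ⟨rfl, hj⟩, if_pos hj]
            · rw [if_neg (fun hc => hj hc.2), if_neg hj]
          rw [Finset.sum_congr rfl h1, Finset.sum_congr rfl h2, Finset.sum_ite_mem]
          have hinter : (Finset.univ.erase i) ∩ (S.erase i) = S.erase i := by
            apply Finset.inter_eq_right.mpr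
            intro x hx
            exact Finset.mem_erase.mpr ⟨(Finset.mem_erase.mp hx).1, Finset.mem_univ x⟩
          rw [hinter, Finset.sum_const, ← hm', nsmul_eq_mul]
          rw [Finset.sum_ite_eq' _ i0 (fun _ => -η), if_pos]
          · ring
          · refine Finset.mem_erase.mpr ⟨?_, Finset.mem_univ i0⟩
            intro hc
            exact hj0ne hc.symm
        · rw [if_neg hi]
          have h1 : ∀ j ∈ Finset.univ.erase i, (if i = j0 ∧ j ∈ S.erase j0 then δ else 0) = 0 :=
            fun j _ => if_neg (fun hc => hi hc.1)
          have h2 : ∀ j ∈ Finset.univ.erase i, (if i = j0 ∧ j = i0 then -η else 0) = 0 :=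
            fun j _ => if_neg (fun hc => hi hc.1)
          rw [Finset.sum_congr rfl h1, Finset.sum_congr rfl h2]
          simp
      refine ⟨fun a b => p' a b + g a b, ⟨?_, ?_⟩, ?_, ?_, ?_⟩
      · -- nonneg
        intro a b
        show 0 ≤ p' a b + g a b
        have hp := hPM.1 a b
        by_cases hab : a = j0 ∧ b = i0
        · have hgv : g a b = δ - η := by
            rw [hg]; dsimp only
            rw [if_pos hab, if_pos ⟨hab.1, hab.2 ▸ hi0erase⟩]
            ring
          have hpv : p' a b = p' j0 i0 := by rw [hab.1, hab.2]
          rw [hgv, hpv]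
          linarith
        · have hgv : g a b = if a = j0 ∧ b ∈ S.erase j0 then δ else 0 := by
            rw [hg]; dsimp only
            rw [if_neg hab, add_zero]
          rw [hgv]
          split <;> linarith
      · -- zero diagonal
        intro a
        have hga : g a a = 0 := by
          have hneg1 : ¬(a = j0 ∧ a ∈ S.erase j0) := by
            rintro ⟨rfl, hc⟩; exact (Finset.mem_erase.mp hc).1 rfl
          have hneg2 : ¬(a = j0 ∧ a = i0) := by
            rintro ⟨rfl, hc⟩; exact hj0ne hc
          rw [hg]
          dsimp only
          rw [if_neg hneg1, if_neg hneg2, add_zero]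
        show p' a a + g a a = 0
        rw [hga, hPM.2 a, add_zero]
      · -- payOK
        intro i hiS j hjS
        have h1 : g i j = 0 := by
          have hneg1 : ¬(i = j0 ∧ j ∈ S.erase j0) := by
            rintro ⟨_, hc⟩; exact hjS (Finset.mem_of_mem_erase hc)
          have hneg2 : ¬(i = j0 ∧ j = i0) := by
            rintro ⟨_, rfl⟩; exact hjS hi0
          rw [hg]
          dsimp only
          rw [if_neg hneg1, if_neg hneg2, add_zero]
        have h2 : g j i = 0 := by
          have hneg1 : ¬(j = j0 ∧ i ∈ S.erase j0) := by
            rintro ⟨rfl, _⟩; exact hjS hj0S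
          have hneg2 : ¬(j = j0 ∧ i = i0) := by
            rintro ⟨rfl, _⟩; exact hjS hj0S
          rw [hg]
          dsimp only
          rw [if_neg hneg1, if_neg hneg2, add_zero]
        constructor
        · show p' i j + g i j = 0
          rw [h1, (hOK i hiS j hjS).1, add_zero]
        · show p' j i + g j i = 0
          rw [h2, (hOK i hiS j hjS).2, add_zero]
      · -- rationality
        intro i hiS
        constructor
        · rw [pPlus_add, hcol i]
          have h1 := (hrat i hiS).1
          by_cases hi : i = i0
          · subst hi
            rw [if_pos hi0erase, if_pos rfl]
            rw [htt] at httε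
            linarith
          · rw [if_neg hi]
            split <;> linarith
        · rw [pMinus_add, hrow i]
          have h2 := (hrat i hiS).2
          by_cases hi : i = j0
          · rw [if_pos hi]
            rw [hmδ]
            linarith
          · rw [if_neg hi]
            linarith
      · -- strict utility gain
        intro i hiS
        rw [util_add, hcol i, hrow i]
        by_cases hii0 : i = i0
        · subst hii0
          rw [if_pos hi0erase, if_pos rfl, if_neg (fun hc => hj0ne hc.symm)]
          rw [hε] at hηε
          linarith
        · by_cases hij0 : i = j0
          · subst hij0
            rw [if_neg (fun hc => (Finset.mem_erase.mp hc).1 rfl), if_neg hii0, if_pos rfl]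
            rw [hmδ]
            have := hle i hiS
            linarith
          · rw [if_pos (Finset.mem_erase.mpr ⟨hij0, hiS⟩), if_neg hii0, if_neg hij0]
            have := hle i hiS
            linarith
end P7
section P8
open Finset
variable {n k : ℕ}

lemma continuous_pPlus (i : Fin n) :
    Continuous fun q : Fin n → Fin n → ℝ => pPlus q i := by
  unfold pPlus
  apply continuous_finset_sum
  intro j _
  exact (continuous_apply i).comp (continuous_apply j)

lemma continuous_pMinus (i : Fin n) :
    Continuous fun q : Fin n → Fin n → ℝ => pMinus q i := by
  unfold pMinus
  apply continuous_finset_sum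
  intro j _
  exact (continuous_apply j).comp (continuous_apply i)

lemma continuous_util (X : Fin n → Finset (Fin k)) (r : Fin n → ℕ) (i : Fin n) :
    Continuous fun q : Fin n → Fin n → ℝ => util X r q i := by
  unfold util
  apply Continuous.add
  · exact (continuous_pPlus i).sub continuous_const
  · exact continuous_const.sub (continuous_pMinus i)

lemma continuous_pSum :
    Continuous fun q : Fin n → Fin n → ℝ => pSum Finset.univ q := by
  unfold pSum
  apply continuous_finset_sum
  intro i _
  apply continuous_finset_sum
  intro j _
  exact (continuous_apply j).comp (continuous_apply i)

lemma continuous_inf' {ι : Type*} {E : Type*} [TopologicalSpace E] :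
    ∀ (s : Finset ι) (hs : s.Nonempty) (f : ι → E → ℝ), (∀ i, Continuous (f i)) →
      Continuous (fun x => s.inf' hs (fun i => f i x)) := by
  intro s hs
  induction hs using Finset.Nonempty.cons_induction with
  | singleton a =>
    intro f hf
    simpa using hf a
  | cons a s h hs ih =>
    intro f hf
    have : (fun x => (Finset.cons a s h).inf' (Finset.cons_nonempty h) (fun i => f i x))
        = fun x => (f a x) ⊓ (s.inf' hs (fun i => f i x)) := by
      funext x
      exact Finset.inf'_cons (α := ℝ) (H := hs) (f := fun i => f i x)
    rw [this]
    exact (hf a).min (ih f hf)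

lemma isClosed_optimal {X : Fin n → Finset (Fin k)} (hn : 2 ≤ n) (hk : 1 ≤ k)
    (hX : isCoalition X Finset.univ) (r : Fin n → ℕ) :
    IsClosed {p : Fin n → Fin n → ℝ | optimal X r p} := by
  classical
  apply isClosed_of_closure_subset
  intro p hp
  have hFne : {p : Fin n → Fin n → ℝ | optimal X r p}.Nonempty := by
    by_contra h
    rw [Set.not_nonempty_iff_eq_empty] at h
    rw [h, closure_empty] at hp
    exact hp
  obtain ⟨p1, hp1⟩ := hFne
  obtain ⟨hfeas1, hrs1, _⟩ := (optimal_iff hn hk hX r p1).mp hp1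
  have hrOK : rateOK X Finset.univ r := hfeas1.1
  -- the closed superset
  set C : Set (Fin n → Fin n → ℝ) :=
    {q | isPayMatrix q ∧ rational X Finset.univ r q ∧
      pSum Finset.univ q = (rho X Finset.univ : ℝ)} with hC
  have hCclosed : IsClosed C := by
    rw [hC]
    have h1 : IsClosed {q : Fin n → Fin n → ℝ | isPayMatrix q} := by
      have : {q : Fin n → Fin n → ℝ | isPayMatrix q}
          = (⋂ i, ⋂ j, {q : Fin n → Fin n → ℝ | 0 ≤ q i j}) ∩
            (⋂ i, {q : Fin n → Fin n → ℝ | q i i = 0}) := by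
        ext q
        simp only [Set.mem_inter_iff, Set.mem_iInter, Set.mem_setOf_eq]
        exact ⟨fun h => ⟨h.1, h.2⟩, fun h => ⟨h.1, h.2⟩⟩
      rw [this]
      apply IsClosed.inter
      · exact isClosed_iInter fun i => isClosed_iInter fun j =>
          isClosed_le continuous_const ((continuous_apply j).comp (continuous_apply i))
      · exact isClosed_iInter fun i =>
          isClosed_eq ((continuous_apply i).comp (continuous_apply i)) continuous_const
    have h2 : IsClosed {q : Fin n → Fin n → ℝ | rational X Finset.univ r q} := by
      have : {q : Fin n → Fin n → ℝ | rational X Finset.univ r q}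
          = ⋂ i, ({q : Fin n → Fin n → ℝ | (r i : ℝ) ≤ pPlus q i} ∩
              {q : Fin n → Fin n → ℝ | pMinus q i ≤ ((Xbar X i).card : ℝ)}) := by
        ext q
        simp only [Set.mem_iInter, Set.mem_inter_iff, Set.mem_setOf_eq]
        exact ⟨fun h i => h i (Finset.mem_univ i), fun h i _ => h i⟩
      rw [this]
      exact isClosed_iInter fun i =>
        (isClosed_le continuous_const (continuous_pPlus i)).inter
          (isClosed_le (continuous_pMinus i) continuous_const)
    have h3 : IsClosed {q : Fin n → Fin n → ℝ |
        pSum Finset.univ q = (rho X Finset.univ : ℝ)} :=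
      isClosed_eq continuous_pSum continuous_const
    have : {q : Fin n → Fin n → ℝ | isPayMatrix q ∧ rational X Finset.univ r q ∧
        pSum Finset.univ q = (rho X Finset.univ : ℝ)}
        = {q : Fin n → Fin n → ℝ | isPayMatrix q} ∩
          ({q : Fin n → Fin n → ℝ | rational X Finset.univ r q} ∩
           {q : Fin n → Fin n → ℝ | pSum Finset.univ q = (rho X Finset.univ : ℝ)}) := by
      ext q
      simp only [Set.mem_inter_iff, Set.mem_setOf_eq]
    rw [this]
    exact h1.inter (h2.inter h3)
  have hsubC : {p : Fin n → Fin n → ℝ | optimal X r p} ⊆ C := by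
    intro q hq
    obtain ⟨hfeas, _, hps⟩ := (optimal_iff hn hk hX r q).mp hq
    exact ⟨hfeas.2.1, hfeas.2.2.2.1, hps⟩
  have hpC : p ∈ C := by
    have := closure_mono hsubC hp
    rwa [hCclosed.closure_eq] at this
  obtain ⟨hPM, hrat, hps⟩ := hpC
  -- stability
  have hstable : ¬ ∃ (S : Finset (Fin n)) (r' : Fin n → ℕ) (p' : Fin n → Fin n → ℝ),
      S ⊂ Finset.univ ∧ isCoalition X S ∧ rateOK X S r' ∧ isPayMatrix p' ∧ payOK S p' ∧
      rational X S r' p' ∧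
      (∀ i ∈ S, util X r p i ≤ util X r' p' i) ∧
      ∃ i ∈ S, util X r p i < util X r' p' i := by
    rintro ⟨S, r', p', hSsub, hCoS, hrOK', hPM', hpOK', hrat', hle, i0, hi0, hlt⟩
    obtain ⟨p'', hPM'', hpOK'', hrat'', hstrict''⟩ :=
      strictify hCoS hPM' hpOK' hrat' (fun i _ => util_nonneg hrat i)
        (fun i hi => hle i hi) ⟨i0, hi0, hlt⟩
    set O : Set (Fin n → Fin n → ℝ) :=
      {q | ∀ i ∈ S, util X r q i < util X r' p'' i} with hO
    have hOopen : IsOpen O := by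
      have : O = ⋂ i ∈ S, {q : Fin n → Fin n → ℝ | util X r q i < util X r' p'' i} := by
        ext q
        simp only [hO, Set.mem_setOf_eq, Set.mem_iInter]
      rw [this]
      apply isOpen_biInter_finset
      intro i _
      exact isOpen_lt (continuous_util X r i) continuous_const
    have hpO : p ∈ O := fun i hi => hstrict'' i hi
    obtain ⟨q, hqO, hqF⟩ := (_root_.mem_closure_iff.mp hp) O hOopen hpO
    have hqopt : optimal X r q := hqF
    exact hqopt.1.2.2.2.2 ⟨S, r', p'', hSsub, hCoS, hrOK', hPM'', hpOK'', hrat'',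
      fun i hi => le_of_lt (hqO i hi), i0, hi0, hqO i0 hi0⟩
  exact (optimal_iff hn hk hX r p).mpr
    ⟨⟨hrOK, hPM, fun i _ j hj => absurd (Finset.mem_univ j) hj, hrat, hstable⟩, hrs1, hps⟩
end P8

/-- There exists an optimal pair `(r,p)` that, among all optimal pairs,
simultaneously maximizes the sum-utility and the minimum utility. -/
theorem exists_optimal_max_sum_and_min_utility (n k : ℕ) (hn : 2 ≤ n) (hk : 1 ≤ k)
    (X : Fin n → Finset (Fin k)) (hX : isCoalition X Finset.univ) :
    ∃ (r : Fin n → ℕ) (p : Fin n → Fin n → ℝ), optimal X r p ∧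
      ∀ (r' : Fin n → ℕ) (p' : Fin n → Fin n → ℝ), optimal X r' p' →
        (∑ i, util X r' p' i ≤ ∑ i, util X r p i) ∧
        Finset.univ.inf' ⟨⟨0, by omega⟩, Finset.mem_univ _⟩ (util X r' p') ≤
          Finset.univ.inf' ⟨⟨0, by omega⟩, Finset.mem_univ _⟩ (util X r p) := by
  classical
  set R := rho X Finset.univ with hR
  obtain ⟨r0, p0, hf0, hr0, hp0⟩ := exists_R_pair hn hk hX
  have hopt0 : optimal X r0 p0 := (optimal_iff hn hk hX r0 p0).mpr ⟨hf0, hr0, hp0⟩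
  -- finite set of candidate rate vectors
  set F : Finset (Fin n → ℕ) :=
    Finset.image (fun f : Fin n → Fin (R+1) => fun i => (f i : ℕ)) Finset.univ with hF
  have hmemF : ∀ {r : Fin n → ℕ} {p : Fin n → Fin n → ℝ}, optimal X r p → r ∈ F := by
    intro r p hopt
    have hrs := ((optimal_iff hn hk hX r p).mp hopt).2.1
    have hbound : ∀ i, r i < R + 1 := by
      intro i
      have : r i ≤ rSum Finset.univ r :=
        Finset.single_le_sum (f := r) (fun _ _ => Nat.zero_le _) (Finset.mem_univ i)
      omega
    rw [hF]
    apply Finset.mem_image.mpr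
    exact ⟨fun i => ⟨r i, hbound i⟩, Finset.mem_univ _, rfl⟩
  -- the compact search space
  set A : Set ((Fin n → ℝ) × (Fin n → Fin n → ℝ)) :=
    ⋃ r ∈ F, (({fun i => (r i : ℝ)} : Set (Fin n → ℝ)) ×ˢ {p | optimal X r p}) with hA
  have hAclosed : IsClosed A := by
    rw [hA]
    apply Set.Finite.isClosed_biUnion (F.finite_toSet)
    intro r _
    exact isClosed_singleton.prod (isClosed_optimal hn hk hX r)
  set K : Set ((Fin n → ℝ) × (Fin n → Fin n → ℝ)) :=
    (Set.pi Set.univ fun _ : Fin n => Set.Icc (0:ℝ) R) ×ˢ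
      (Set.pi Set.univ fun _ : Fin n => Set.pi Set.univ fun _ : Fin n => Set.Icc (0:ℝ) R)
    with hK
  have hKcomp : IsCompact K := by
    rw [hK]
    exact (isCompact_univ_pi fun _ => isCompact_Icc).prod
      (isCompact_univ_pi fun _ => isCompact_univ_pi fun _ => isCompact_Icc)
  have hAK : A ⊆ K := by
    rw [hA]
    intro z hz
    rw [Set.mem_iUnion₂] at hz
    obtain ⟨r, hrF, hzmem⟩ := hz
    rw [Set.mem_prod] at hzmem
    obtain ⟨hz1, hz2⟩ := hzmem
    have hopt : optimal X r z.2 := hz2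
    obtain ⟨hfeas, hrs, hps⟩ := (optimal_iff hn hk hX r z.2).mp hopt
    rw [hK]
    constructor
    · intro i _
      rw [Set.mem_singleton_iff] at hz1
      rw [hz1]
      constructor
      · exact Nat.cast_nonneg _
      · show ((r i : ℕ) : ℝ) ≤ (R : ℝ)
        have : r i ≤ rSum Finset.univ r :=
          Finset.single_le_sum (f := r) (fun _ _ => Nat.zero_le _) (Finset.mem_univ i)
        rw [hrs] at this
        exact_mod_cast this
    · intro i _
      intro j _
      constructor
      · exact hfeas.2.1.1 i j
      · have h1 : z.2 i j ≤ ∑ j', z.2 i j' := by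
          apply Finset.single_le_sum (f := fun j' => z.2 i j') _ (Finset.mem_univ j)
          intro j' _
          exact hfeas.2.1.1 i j'
        have h2 : ∑ j', z.2 i j' ≤ pSum Finset.univ z.2 := by
          unfold pSum
          apply Finset.single_le_sum (f := fun i' => ∑ j', z.2 i' j') _ (Finset.mem_univ i)
          intro i' _
          exact Finset.sum_nonneg fun j' _ => hfeas.2.1.1 i' j'
        rw [hps] at h2
        linarith
  have hAcomp : IsCompact A := hKcomp.of_isClosed_subset hAclosed hAK
  have hAne : A.Nonempty := by
    refine ⟨((fun i => (r0 i : ℝ)), p0), ?_⟩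
    rw [hA]
    rw [Set.mem_iUnion₂]
    exact ⟨r0, hmemF hopt0, Set.mem_prod.mpr ⟨rfl, hopt0⟩⟩
  -- the min-utility objective
  have hne : (Finset.univ : Finset (Fin n)).Nonempty := ⟨⟨0, by omega⟩, Finset.mem_univ _⟩
  set f : (Fin n → ℝ) × (Fin n → Fin n → ℝ) → ℝ :=
    fun z => Finset.univ.inf' hne
      (fun i => (pPlus z.2 i - z.1 i) + (((Xbar X i).card : ℝ) - pMinus z.2 i)) with hf
  have hfcont : Continuous f := by
    rw [hf]
    apply continuous_inf'
    intro i
    apply Continuous.add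
    · apply Continuous.sub
      · exact (continuous_pPlus i).comp continuous_snd
      · exact (continuous_apply i).comp continuous_fst
    · apply Continuous.sub
      · exact continuous_const
      · exact (continuous_pMinus i).comp continuous_snd
  obtain ⟨z0, hz0A, hz0max'⟩ := hAcomp.exists_isMaxOn hAne hfcont.continuousOn
  have hz0max : ∀ z ∈ A, f z ≤ f z0 := fun z hz => hz0max' hz
  -- decode the maximizer
  have hz0A' := hz0A
  rw [hA, Set.mem_iUnion₂] at hz0A'
  obtain ⟨r1, hr1F, hz0mem⟩ := hz0A'
  rw [Set.mem_prod] at hz0mem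
  obtain ⟨hz01, hz02⟩ := hz0mem
  rw [Set.mem_singleton_iff] at hz01
  have hopt1 : optimal X r1 z0.2 := hz02
  have hfeq : ∀ (r' : Fin n → ℕ) (p' : Fin n → Fin n → ℝ),
      f ((fun i => (r' i : ℝ)), p') = Finset.univ.inf' hne (util X r' p') := by
    intro r' p'
    rw [hf]
    exact Finset.inf'_congr hne rfl (fun i _ => rfl)
  refine ⟨r1, z0.2, hopt1, ?_⟩
  intro r' p' hopt'
  constructor
  · rw [optimal_sum_util hn hk hX hopt', optimal_sum_util hn hk hX hopt1]
  · have hmem' : ((fun i => (r' i : ℝ)), p') ∈ A := by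
      rw [hA, Set.mem_iUnion₂]
      exact ⟨r', hmemF hopt', Set.mem_prod.mpr ⟨rfl, hopt'⟩⟩
    have hle := hz0max _ hmem'
    rw [hfeq r' p'] at hle
    have hz0eq : f z0 = Finset.univ.inf' hne (util X r1 z0.2) := by
      have : z0 = ((fun i => (r1 i : ℝ)), z0.2) := by
        rw [← hz01]
      rw [this, hfeq r1 z0.2]
    rw [hz0eq] at hle
    exact hle
end

section
/- Let (r,p) be a rational pair with r ∈ 𝓡_N and p ∈ 𝒫_N such that p⁺_i = r_i for every i ∈ N. If for every minor coalition S and every r̃ ∈ 𝓡_S one has ∑_{i∈S} p⁻_i ≤ r̃_S, then (r,p) is feasible (i.e., the grand coalition N is (r,p)-stable). -/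
/-- If `(r,p)` is a rational pair with `r ∈ 𝓡_N`, `p ∈ 𝒫_N`, `p⁺_i = r_i` for
every `i`, and for every minor coalition `S` and every `r̃ ∈ 𝓡_S` one has
`∑_{i∈S} p⁻_i ≤ r̃_S`, then `(r,p)` is feasible (the grand coalition is `(r,p)`-stable). -/
theorem feasible_of_payment_le_rate (n k : ℕ) (hn : 2 ≤ n) (hk : 1 ≤ k)
    (X : Fin n → Finset (Fin k)) (hX : isCoalition X Finset.univ)
    (r : Fin n → ℕ) (hr : rateOK X Finset.univ r)
    (p : Fin n → Fin n → ℝ) (hp : isPayMatrix p) (hpN : payOK Finset.univ p)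
    (hrat : rational X Finset.univ r p)
    (heq : ∀ i, pPlus p i = (r i : ℝ))
    (hkey : ∀ S : Finset (Fin n), S ⊂ Finset.univ → isCoalition X S →
      ∀ r' : Fin n → ℕ, rateOK X S r' → ∑ i ∈ S, pMinus p i ≤ (rSum S r' : ℝ)) :
    feasible X r p := by
  refine ⟨hr, hp, hpN, hrat, ?_⟩
  rintro ⟨S, r', p', hSsub, hScoal, hr', hp', hpS, hrat', hdom, i0, hi0, hstrict⟩
  have hpay : ∀ q : Fin n → Fin n → ℝ, isPayMatrix q → payOK S q →
      ∑ i ∈ S, pPlus q i = ∑ i ∈ S, pMinus q i := by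
    intro q hq hqS
    have h1 : ∀ i ∈ S, pPlus q i = ∑ j ∈ S, q j i := by
      intro i hi
      rw [pPlus, Finset.sum_erase (f := fun j => q j i) _ (hq.2 i)]
      exact (Finset.sum_subset (Finset.subset_univ S)
        (fun j _ hj => (hqS i hi j hj).2)).symm
    have h2 : ∀ i ∈ S, pMinus q i = ∑ j ∈ S, q i j := by
      intro i hi
      rw [pMinus, Finset.sum_erase (f := fun j => q i j) _ (hq.2 i)]
      exact (Finset.sum_subset (Finset.subset_univ S)
        (fun j _ hj => (hqS i hi j hj).1)).symm
    rw [Finset.sum_congr rfl h1, Finset.sum_congr rfl h2, Finset.sum_comm]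
  have hsum_lt : ∑ i ∈ S, util X r p i < ∑ i ∈ S, util X r' p' i :=
    Finset.sum_lt_sum hdom ⟨i0, hi0, hstrict⟩
  have e1 : ∑ i ∈ S, util X r p i
      = ∑ i ∈ S, ((Xbar X i).card : ℝ) - ∑ i ∈ S, pMinus p i := by
    rw [← Finset.sum_sub_distrib]
    refine Finset.sum_congr rfl fun i _ => ?_
    unfold util
    rw [heq i]; ring
  have e2 : ∑ i ∈ S, util X r' p' i
      = ∑ i ∈ S, ((Xbar X i).card : ℝ) - (rSum S r' : ℝ) := by
    unfold util
    have := hpay p' hp' hpS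
    rw [rSum]
    push_cast
    rw [← Finset.sum_sub_distrib]
    simp only [Finset.sum_add_distrib, Finset.sum_sub_distrib]
    rw [this]
    ring
  rw [e1, e2] at hsum_lt
  have := hkey S hSsub hScoal r' hr'
  linarith
end
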